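/- arXiv:2502.05355 — 7 statements merged into one kernel-verified Lean document; each statement's English description precedes it below -/
import Mathlib

section
/- The residuals r_k = A x_k − b of NGMRES applied to the fixed-point iteration q(x) = Mx + b, M = I − A, satisfy the recurrence relation r_{k+1} = (1 + Σ_{i=0}^{m_k} β_i^{(k)}) M r_k − Σ_{i=0}^{m_k} β_i^{(k)} r_{k−i}, where β_i^{(k)} are the coefficients used in the NGMRES update x_{k+1} = q(x_k) + Σ_{i=0}^{m_k} β_i^{(k)} (q(x_k) − x_{k−i}). -/
open Matrix Filter

noncomputable section

/-- The residual `r(x) = A x - b` of the linear system `A x = b`. -/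
def residv {n : ℕ} (A : Matrix (Fin n) (Fin n) ℝ) (b x : Fin n → ℝ) : Fin n → ℝ :=
  A.mulVec x - b

/-- The Euclidean 2-norm on `Fin n → ℝ`. -/
def norm2 {n : ℕ} (x : Fin n → ℝ) : ℝ := Real.sqrt (x ⬝ᵥ x)

/-- The fixed-point map `q(x) = M x + b` with `M = I - A`. -/
def qmap {n : ℕ} (A : Matrix (Fin n) (Fin n) ℝ) (b x : Fin n → ℝ) : Fin n → ℝ :=
  (1 - A).mulVec x + b

/-- One NGMRES update from step `k`, with window `mk` and coefficients `β`:
`x_{k+1} = q(x_k) + ∑_{i=0}^{mk} β_i (q(x_k) - x_{k-i})`. -/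
def ngmresUpdate {n : ℕ} (A : Matrix (Fin n) (Fin n) ℝ) (b : Fin n → ℝ)
    (x : ℕ → Fin n → ℝ) (β : ℕ → ℝ) (k mk : ℕ) : Fin n → ℝ :=
  qmap A b (x k) + ∑ i ∈ Finset.range (mk + 1), β i • (qmap A b (x k) - x (k - i))

/-- The NGMRES iteration with window function `mk` (e.g. `mk k = min k m` for NGMRES(m),
`mk k = k` for full NGMRES): each step uses coefficients minimizing the 2-norm of the
next residual. -/
def IsNGMRES {n : ℕ} (A : Matrix (Fin n) (Fin n) ℝ) (b x0 : Fin n → ℝ) (mk : ℕ → ℕ)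
    (x : ℕ → Fin n → ℝ) (β : ℕ → ℕ → ℝ) : Prop :=
  x 0 = x0 ∧ ∀ k, x (k + 1) = ngmresUpdate A b x (β k) k (mk k) ∧
    ∀ β' : ℕ → ℝ, norm2 (residv A b (x (k + 1))) ≤
      norm2 (residv A b (ngmresUpdate A b x β' k (mk k)))

/-- The Krylov subspace `span {r0, A r0, …, A^{k-1} r0}`. -/
def krylov {n : ℕ} (A : Matrix (Fin n) (Fin n) ℝ) (r0 : Fin n → ℝ) (k : ℕ) :
    Submodule ℝ (Fin n → ℝ) :=
  Submodule.span ℝ {v | ∃ i < k, v = (A ^ i).mulVec r0}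

/-- GMRES: `x_k` minimizes the residual 2-norm over the affine space `x0 + K_k`. -/
def IsGMRES {n : ℕ} (A : Matrix (Fin n) (Fin n) ℝ) (b x0 : Fin n → ℝ)
    (x : ℕ → Fin n → ℝ) : Prop :=
  x 0 = x0 ∧ ∀ k, x k - x0 ∈ krylov A (residv A b x0) k ∧
    ∀ y : Fin n → ℝ, y - x0 ∈ krylov A (residv A b x0) k →
      norm2 (residv A b (x k)) ≤ norm2 (residv A b y)

/-- One Anderson acceleration update from step `k`, with window `mk`:
`x_{k+1} = q(x_k) + ∑_{i=1}^{mk} γ_i (q(x_k) - q(x_{k-i}))`. -/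
def aaUpdate {n : ℕ} (A : Matrix (Fin n) (Fin n) ℝ) (b : Fin n → ℝ)
    (x : ℕ → Fin n → ℝ) (γ : ℕ → ℝ) (k mk : ℕ) : Fin n → ℝ :=
  qmap A b (x k) + ∑ i ∈ Finset.Icc 1 mk, γ i • (qmap A b (x k) - qmap A b (x (k - i)))

/-- The Anderson acceleration least-squares objective
`r(x_k) + ∑_{i=1}^{mk} γ_i (r(x_k) - r(x_{k-i}))`. -/
def aaObj {n : ℕ} (A : Matrix (Fin n) (Fin n) ℝ) (b : Fin n → ℝ)
    (x : ℕ → Fin n → ℝ) (γ : ℕ → ℝ) (k mk : ℕ) : Fin n → ℝ :=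
  residv A b (x k) + ∑ i ∈ Finset.Icc 1 mk, γ i • (residv A b (x k) - residv A b (x (k - i)))

/-- Anderson acceleration with window function `mk`. -/
def IsAA {n : ℕ} (A : Matrix (Fin n) (Fin n) ℝ) (b x0 : Fin n → ℝ) (mk : ℕ → ℕ)
    (x : ℕ → Fin n → ℝ) (γ : ℕ → ℕ → ℝ) : Prop :=
  x 0 = x0 ∧ ∀ k, x (k + 1) = aaUpdate A b x (γ k) k (mk k) ∧
    ∀ γ' : ℕ → ℝ, norm2 (aaObj A b x (γ k) k (mk k)) ≤ norm2 (aaObj A b x γ' k (mk k))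

/-- The spectral norm `‖A‖₂` (the ℓ²→ℓ² operator norm). -/
def specNorm {n : ℕ} (A : Matrix (Fin n) (Fin n) ℝ) : ℝ :=
  ‖LinearMap.toContinuousLinearMap (Matrix.toEuclideanLin A)‖

/-- The spectral radius of a real matrix (computed over `ℂ`). -/
def specRad {n : ℕ} (M : Matrix (Fin n) (Fin n) ℝ) : ℝ :=
  (spectralRadius ℂ (M.map Complex.ofReal)).toReal


/-- the residual recurrence
`r_{k+1} = (1 + ∑ β_i) M r_k - ∑ β_i r_{k-i}`, `M = I - A`, for an arbitrary NGMRES update. -/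
theorem stmt1 (n : ℕ) (A : Matrix (Fin n) (Fin n) ℝ) (b : Fin n → ℝ)
    (x : ℕ → Fin n → ℝ) (β : ℕ → ℝ) (k mk : ℕ)
    (hx : x (k + 1) = ngmresUpdate A b x β k mk) :
    residv A b (x (k + 1)) =
      (1 + ∑ i ∈ Finset.range (mk + 1), β i) • (1 - A).mulVec (residv A b (x k))
        - ∑ i ∈ Finset.range (mk + 1), β i • residv A b (x (k - i)) := by
  have key : ∀ y : Fin n → ℝ, A.mulVec (qmap A b y) = (1 - A).mulVec (residv A b y) + b := by
    intro y
    simp only [qmap, residv, Matrix.mulVec_add, Matrix.mulVec_sub, Matrix.sub_mulVec,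
      Matrix.one_mulVec, Matrix.mulVec_mulVec, sub_mul, mul_sub, mul_one, one_mul]
    abel
  have hA : ∀ j : ℕ, A.mulVec (x j) = residv A b (x j) + b := by
    intro j; simp [residv]
  rw [hx]
  show A.mulVec (ngmresUpdate A b x β k mk) - b = _
  have hsum : A.mulVec (∑ i ∈ Finset.range (mk + 1), β i • (qmap A b (x k) - x (k - i)))
      = ∑ i ∈ Finset.range (mk + 1), β i • (A.mulVec (qmap A b (x k)) - A.mulVec (x (k - i))) := by
    rw [show A.mulVec = Matrix.mulVecLin A from rfl, map_sum]
    simp [Matrix.mulVec_sub]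
  rw [show ngmresUpdate A b x β k mk = qmap A b (x k)
      + ∑ i ∈ Finset.range (mk + 1), β i • (qmap A b (x k) - x (k - i)) from rfl,
    Matrix.mulVec_add, hsum]
  simp only [key, hA, smul_sub, smul_add, Finset.sum_sub_distrib, Finset.sum_add_distrib,
    ← Finset.sum_smul, add_smul, one_smul]
  abel

end
end

section
/- Assume full NGMRES and GMRES are applied to the linear system Ax = b with the same initial guess x_0 ≠ x*, where x* is a solution. Assume for some k_0 > 0 that the GMRES residuals satisfy r_{k_0−1}^G ≠ 0 and ‖r_{k−1}^G‖₂ > ‖r_k^G‖₂ for each k with 0 < k < k_0. Then the full NGMRES residuals coincide with the GMRES residuals: r_j^{NG} = r_j^G for all 0 ≤ j ≤ k_0. -/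
open Matrix Filter

noncomputable section

namespace NGaux

variable {n : ℕ}

lemma dot_self_nonneg (x : Fin n → ℝ) : 0 ≤ x ⬝ᵥ x :=
  Finset.sum_nonneg fun i _ => mul_self_nonneg (x i)

lemma norm2_le_iff (u v : Fin n → ℝ) : norm2 u ≤ norm2 v ↔ u ⬝ᵥ u ≤ v ⬝ᵥ v :=
  Real.sqrt_le_sqrt_iff (dot_self_nonneg v)

lemma residv_shift (A : Matrix (Fin n) (Fin n) ℝ) (b x0 y : Fin n → ℝ) :
    residv A b y = residv A b x0 + A.mulVec (y - x0) := by
  simp only [residv, Matrix.mulVec_sub]; abel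

lemma qmap_eq (A : Matrix (Fin n) (Fin n) ℝ) (b x : Fin n → ℝ) :
    qmap A b x = x - residv A b x := by
  simp only [qmap, residv, Matrix.sub_mulVec, Matrix.one_mulVec]; abel

lemma krylov_mono (A : Matrix (Fin n) (Fin n) ℝ) (r0 : Fin n → ℝ) {j k : ℕ} (h : j ≤ k) :
    krylov A r0 j ≤ krylov A r0 k :=
  Submodule.span_mono (fun v hv => by obtain ⟨i, hi, hv⟩ := hv; exact ⟨i, lt_of_lt_of_le hi h, hv⟩)

lemma mem_krylov_gen (A : Matrix (Fin n) (Fin n) ℝ) (r0 : Fin n → ℝ) {i k : ℕ} (h : i < k) :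
    (A ^ i).mulVec r0 ∈ krylov A r0 k :=
  Submodule.subset_span ⟨i, h, rfl⟩

lemma r0_mem_krylov (A : Matrix (Fin n) (Fin n) ℝ) (r0 : Fin n → ℝ) {k : ℕ} (h : 0 < k) :
    r0 ∈ krylov A r0 k := by
  have := mem_krylov_gen A r0 h
  simpa using this

lemma krylov_succ (A : Matrix (Fin n) (Fin n) ℝ) (r0 : Fin n → ℝ) (k : ℕ) :
    krylov A r0 (k + 1) = krylov A r0 k ⊔ Submodule.span ℝ {(A ^ k).mulVec r0} := by
  unfold krylov
  rw [← Submodule.span_union]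
  congr 1
  ext v
  constructor
  · rintro ⟨i, hi, rfl⟩
    rcases Nat.lt_succ_iff_lt_or_eq.mp hi with h | rfl
    · exact Or.inl ⟨i, h, rfl⟩
    · exact Or.inr rfl
  · rintro (⟨i, hi, rfl⟩ | h)
    · exact ⟨i, hi.trans (Nat.lt_succ_self k), rfl⟩
    · exact ⟨k, Nat.lt_succ_self k, h⟩

lemma mulVec_mem_krylov (A : Matrix (Fin n) (Fin n) ℝ) (r0 : Fin n → ℝ) {k : ℕ} {v : Fin n → ℝ}
    (hv : v ∈ krylov A r0 k) : A.mulVec v ∈ krylov A r0 (k + 1) := by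
  induction hv using Submodule.span_induction with
  | mem x hx =>
    obtain ⟨i, hi, rfl⟩ := hx
    have : A.mulVec ((A ^ i).mulVec r0) = (A ^ (i + 1)).mulVec r0 := by
      rw [pow_succ', Matrix.mulVec_mulVec]
    rw [this]
    exact mem_krylov_gen A r0 (by omega)
  | zero => simp
  | add x y _ _ hx hy => rw [Matrix.mulVec_add]; exact add_mem hx hy
  | smul c x _ hx => rw [Matrix.mulVec_smul]; exact Submodule.smul_mem _ _ hx

lemma min_unique {u v : Fin n → ℝ} (huv : u ⬝ᵥ u = v ⬝ᵥ v)
    (h : u ⬝ᵥ u ≤ (((1:ℝ)/2) • (u + v)) ⬝ᵥ (((1:ℝ)/2) • (u + v))) : u = v := by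
  have hexp : (((1:ℝ)/2) • (u + v)) ⬝ᵥ (((1:ℝ)/2) • (u + v))
      = (1/4) * (u ⬝ᵥ u) + (1/2) * (u ⬝ᵥ v) + (1/4) * (v ⬝ᵥ v) := by
    simp only [smul_dotProduct, dotProduct_smul, add_dotProduct,
      dotProduct_add, dotProduct_comm v u, smul_eq_mul]
    ring
  have hd : (u - v) ⬝ᵥ (u - v) = u ⬝ᵥ u - 2*(u ⬝ᵥ v) + v ⬝ᵥ v := by
    simp only [sub_dotProduct, dotProduct_sub, dotProduct_comm v u]
    ring
  have h0 : (u - v) ⬝ᵥ (u - v) ≤ 0 := by rw [hd]; nlinarith [h, hexp, huv]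
  have h1 : (u - v) ⬝ᵥ (u - v) = 0 := le_antisymm h0 (dot_self_nonneg _)
  have h2 : u - v = 0 := dotProduct_self_eq_zero.mp h1
  exact sub_eq_zero.mp h2

end NGaux

open NGaux

/-- under strict decrease of the GMRES residual norms up to `k0`,
the full NGMRES residuals coincide with the GMRES residuals up to `k0`. -/
theorem stmt2 (n : ℕ) (A : Matrix (Fin n) (Fin n) ℝ) (b x0 xstar : Fin n → ℝ)
    (xNG xG : ℕ → Fin n → ℝ) (β : ℕ → ℕ → ℝ)
    (hNG : IsNGMRES A b x0 (fun k => k) xNG β)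
    (hG : IsGMRES A b x0 xG)
    (hstar : A.mulVec xstar = b) (hx0 : x0 ≠ xstar)
    (k0 : ℕ) (hk0 : 0 < k0)
    (hrk0 : residv A b (xG (k0 - 1)) ≠ 0)
    (hdec : ∀ k, 0 < k → k < k0 →
      norm2 (residv A b (xG k)) < norm2 (residv A b (xG (k - 1)))) :
    ∀ j ≤ k0, residv A b (xNG j) = residv A b (xG j) := by
  obtain ⟨hNG0, hNGstep⟩ := hNG
  obtain ⟨hG0, hGstep⟩ := hG
  set r0 : Fin n → ℝ := residv A b x0 with hr0def
  have hres : ∀ y : Fin n → ℝ, residv A b y = r0 + A.mulVec (y - x0) :=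
    fun y => residv_shift A b x0 y
  have hGopt : ∀ k : ℕ, ∀ v ∈ krylov A r0 k,
      norm2 (residv A b (xG k)) ≤ norm2 (r0 + A.mulVec v) := by
    intro k v hv
    have h1 := (hGstep k).2 (x0 + v) (by simpa using hv)
    rwa [hres (x0 + v), add_sub_cancel_left] at h1
  suffices H : ∀ j, j ≤ k0 → ∀ i ≤ j,
      residv A b (xNG i) = residv A b (xG i) ∧ xNG i - x0 ∈ krylov A r0 i by
    intro j hj
    exact (H j hj j le_rfl).1
  intro j
  induction j with
  | zero =>
    intro _ i hi
    obtain rfl := Nat.le_zero.mp hi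
    refine ⟨by rw [hNG0, hG0], ?_⟩
    simp [hNG0]
  | succ k ih =>
    intro hk1 i hi
    have hk : k ≤ k0 := Nat.le_of_succ_le hk1
    have IH := ih hk
    rcases Nat.lt_succ_iff_lt_or_eq.mp (Nat.lt_succ_of_le hi) with h | rfl
    · exact IH i (Nat.lt_succ_iff.mp h)
    -- now prove P (k+1)
    set q : Fin n → ℝ := qmap A b (xNG k) with hq
    set rk : Fin n → ℝ := residv A b (xNG k) with hrk
    have hqx : q = xNG k - rk := qmap_eq A b (xNG k)
    -- non-stagnation
    have hnots : ∀ i, 1 ≤ i → i ≤ k → xNG i - x0 ∉ krylov A r0 (i - 1) := by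
      intro i h1 h2 hmem
      have hle := hGopt (i - 1) _ hmem
      rw [← hres (xNG i), (IH i h2).1] at hle
      have hlt := hdec i h1 (lt_of_le_of_lt h2 (Nat.lt_of_succ_le hk1))
      exact absurd hle (not_le.mpr hlt)
    -- decomposition
    have hdecomp : ∀ j, 1 ≤ j → j ≤ k → ∃ t ∈ krylov A r0 (j - 1), ∃ c : ℝ, c ≠ 0 ∧
        xNG j - x0 = t + c • (A ^ (j - 1)).mulVec r0 := by
      intro j h1 h2
      have hmem : xNG j - x0 ∈ krylov A r0 ((j - 1) + 1) := by
        rw [Nat.sub_add_cancel h1]; exact (IH j h2).2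
      rw [krylov_succ] at hmem
      rcases Submodule.mem_sup.mp hmem with ⟨t, ht, s, hs, hts⟩
      rcases Submodule.mem_span_singleton.mp hs with ⟨c, rfl⟩
      refine ⟨t, ht, c, ?_, hts.symm⟩
      rintro rfl
      rw [zero_smul, add_zero] at hts
      exact hnots j h1 h2 (hts ▸ ht)
    -- fact (a)
    set Dgen : Set (Fin n → ℝ) := {v | ∃ i, 1 ≤ i ∧ i ≤ k ∧ v = xNG i - x0} with hDgen
    have hDa : krylov A r0 k ≤ Submodule.span ℝ Dgen := by
      have key : ∀ j, j ≤ k → krylov A r0 j ≤ Submodule.span ℝ Dgen := by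
        intro j
        induction j with
        | zero =>
          intro _
          refine Submodule.span_le.mpr ?_
          rintro v ⟨i, hi, -⟩
          exact absurd hi (Nat.not_lt_zero i)
        | succ j ihj =>
          intro hjk
          have hjk' : j ≤ k := Nat.le_of_succ_le hjk
          rw [krylov_succ]
          refine sup_le (ihj hjk') ?_
          rw [Submodule.span_singleton_le_iff_mem]
          obtain ⟨t, ht, c, hc, hxe⟩ := hdecomp (j + 1) (by omega) hjk
          simp only [Nat.add_sub_cancel] at ht hxe
          have hg : (A ^ j).mulVec r0 = c⁻¹ • ((xNG (j + 1) - x0) - t) := by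
            rw [hxe]
            rw [add_sub_cancel_left, smul_smul, inv_mul_cancel₀ hc, one_smul]
          rw [hg]
          refine Submodule.smul_mem _ _ (Submodule.sub_mem _ ?_ ?_)
          · exact Submodule.subset_span ⟨j + 1, by omega, by omega, rfl⟩
          · exact ihj hjk' ht
      exact key k le_rfl
    -- q - x0 ∈ krylov (k+1)
    have hrk_mem : rk ∈ krylov A r0 (k + 1) := by
      rw [hrk, hres]
      exact add_mem (r0_mem_krylov A r0 (Nat.succ_pos k))
        (mulVec_mem_krylov A r0 (IH k le_rfl).2)
    have hqx0 : q - x0 ∈ krylov A r0 (k + 1) := by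
      have he : q - x0 = (xNG k - x0) - rk := by rw [hqx]; abel
      rw [he]
      exact sub_mem (krylov_mono A r0 (Nat.le_succ k) (IH k le_rfl).2) hrk_mem
    -- claim C'
    have hC : krylov A r0 (k + 1) ≤ krylov A r0 k ⊔ Submodule.span ℝ {rk} := by
      rw [krylov_succ]
      refine sup_le le_sup_left ?_
      rw [Submodule.span_singleton_le_iff_mem]
      rcases Nat.eq_zero_or_pos k with rfl | hkpos
      · have hrr : rk = r0 := by rw [hrk, hNG0]
        have : (A ^ 0).mulVec r0 = rk := by rw [hrr]; simp
        rw [this]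
        exact le_sup_right (α := Submodule ℝ (Fin n → ℝ)) (Submodule.mem_span_singleton_self rk)
      · obtain ⟨t, ht, c, hc, hxe⟩ := hdecomp k hkpos le_rfl
        have hAt : A.mulVec t ∈ krylov A r0 k := by
          have := mulVec_mem_krylov A r0 ht
          rwa [Nat.sub_add_cancel hkpos] at this
        have hrk2 : rk = r0 + A.mulVec t + c • (A ^ k).mulVec r0 := by
          rw [hrk, hres, hxe, Matrix.mulVec_add, Matrix.mulVec_smul,
            Matrix.mulVec_mulVec, ← pow_succ', Nat.sub_add_cancel hkpos, add_assoc]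
        have hg : (A ^ k).mulVec r0 = c⁻¹ • (rk - r0 - A.mulVec t) := by
          rw [hrk2]
          have : r0 + A.mulVec t + c • (A ^ k).mulVec r0 - r0 - A.mulVec t
              = c • (A ^ k).mulVec r0 := by abel
          rw [this, smul_smul, inv_mul_cancel₀ hc, one_smul]
        rw [hg]
        refine Submodule.smul_mem _ _ (Submodule.sub_mem _ (Submodule.sub_mem _ ?_ ?_) ?_)
        · exact Submodule.mem_sup_right (Submodule.mem_span_singleton_self rk)
        · exact Submodule.mem_sup_left (r0_mem_krylov A r0 hkpos)
        · exact Submodule.mem_sup_left hAt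
    -- spanW
    set f : Fin (k + 1) → (Fin n → ℝ) := fun i => q - xNG (k - (i : ℕ)) with hf
    set W : Submodule ℝ (Fin n → ℝ) := Submodule.span ℝ (Set.range f) with hWdef
    have hfk : f ⟨k, by omega⟩ = q - x0 := by
      simp only [hf, Nat.sub_self]
      rw [hNG0]
    have hrkW : rk ∈ W := by
      have h0 : f ⟨0, by omega⟩ = q - xNG k := by simp [hf]
      have : rk = -(f ⟨0, by omega⟩) := by rw [h0, hqx]; abel
      rw [this]
      exact neg_mem (Submodule.subset_span ⟨_, rfl⟩)
    have hgenW : ∀ j ≤ k, xNG j - x0 ∈ W := by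
      intro j hj
      have h1 : f ⟨k - j, by omega⟩ = q - xNG j := by
        simp only [hf, Nat.sub_sub_self hj]
      have he : xNG j - x0 = f ⟨k, by omega⟩ - f ⟨k - j, by omega⟩ := by
        rw [h1, hfk]; abel
      rw [he]
      exact sub_mem (Submodule.subset_span ⟨_, rfl⟩) (Submodule.subset_span ⟨_, rfl⟩)
    have hWle : W ≤ krylov A r0 (k + 1) := by
      rw [hWdef, Submodule.span_le]
      rintro v ⟨i, rfl⟩
      have he : f i = (q - x0) - (xNG (k - (i : ℕ)) - x0) := by simp only [hf]; abel
      rw [he]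
      exact sub_mem hqx0
        (krylov_mono A r0 (by omega) (IH (k - (i : ℕ)) (by omega)).2)
    have hleW : krylov A r0 (k + 1) ≤ W := by
      refine hC.trans (sup_le ?_ ?_)
      · refine hDa.trans (Submodule.span_le.mpr ?_)
        rintro v ⟨i, h1, h2, rfl⟩
        exact hgenW i h2
      · rw [Submodule.span_singleton_le_iff_mem]
        exact hrkW
    -- residual membership of updates
    have hupd : ∀ β' : ℕ → ℝ, ngmresUpdate A b xNG β' k k - x0 ∈ krylov A r0 (k + 1) := by
      intro β'
      have he : ngmresUpdate A b xNG β' k k - x0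
          = (q - x0) + ∑ i ∈ Finset.range (k + 1), β' i • (q - xNG (k - i)) := by
        unfold ngmresUpdate
        rw [← hq]; abel
      rw [he]
      refine add_mem hqx0 (Submodule.sum_mem _ fun i hi => Submodule.smul_mem _ _ ?_)
      exact hWle (Submodule.subset_span ⟨⟨i, Finset.mem_range.mp hi⟩, rfl⟩)
    have h1 : ∀ β' : ℕ → ℝ, norm2 (residv A b (xG (k + 1)))
        ≤ norm2 (residv A b (ngmresUpdate A b xNG β' k k)) := by
      intro β'
      have := hGopt (k + 1) _ (hupd β')
      rwa [← hres] at this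
    -- exists β' reaching xG (k+1)
    have hx1 : xG (k + 1) - q ∈ W := by
      have hmemK : xG (k + 1) - x0 ∈ krylov A r0 (k + 1) := (hGstep (k + 1)).1
      have he : xG (k + 1) - q = (xG (k + 1) - x0) - (q - x0) := by abel
      rw [he]
      exact sub_mem (hleW hmemK) (hfk ▸ Submodule.subset_span ⟨_, rfl⟩)
    obtain ⟨c, hc⟩ := (Submodule.mem_span_range_iff_exists_fun ℝ).mp (by rw [hWdef] at hx1; exact hx1)
    set β' : ℕ → ℝ := fun i => if h : i < k + 1 then c ⟨i, h⟩ else 0 with hβ'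
    have hupdeq : ngmresUpdate A b xNG β' k k = xG (k + 1) := by
      unfold ngmresUpdate
      rw [← hq]
      have hs : ∑ i ∈ Finset.range (k + 1), β' i • (q - xNG (k - i))
          = ∑ i : Fin (k + 1), c i • f i := by
        rw [← Fin.sum_univ_eq_sum_range (fun i => β' i • (q - xNG (k - i)))]
        refine Finset.sum_congr rfl fun i _ => ?_
        simp only [hβ', i.isLt, dif_pos, hf]
      rw [hs, hc]
      abel
    have h2le : norm2 (residv A b (xNG (k + 1))) ≤ norm2 (residv A b (xG (k + 1))) := by
      have := (hNGstep k).2 β'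
      rwa [hupdeq] at this
    have h1le : norm2 (residv A b (xG (k + 1))) ≤ norm2 (residv A b (xNG (k + 1))) := by
      have := h1 (β k)
      rwa [← (hNGstep k).1] at this
    -- memberships at k+1
    have hmemNG : xNG (k + 1) - x0 ∈ krylov A r0 (k + 1) := by
      rw [(hNGstep k).1]; exact hupd (β k)
    have hmemG : xG (k + 1) - x0 ∈ krylov A r0 (k + 1) := (hGstep (k + 1)).1
    refine ⟨?_, hmemNG⟩
    -- uniqueness of the minimizer
    set u : Fin n → ℝ := residv A b (xNG (k + 1)) with hu
    set v : Fin n → ℝ := residv A b (xG (k + 1)) with hv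
    have hdotuv : u ⬝ᵥ u = v ⬝ᵥ v :=
      le_antisymm ((norm2_le_iff u v).mp h2le) ((norm2_le_iff v u).mp h1le)
    have hmid : ((1:ℝ)/2) • (u + v)
        = r0 + A.mulVec (((1:ℝ)/2) • ((xNG (k + 1) - x0) + (xG (k + 1) - x0))) := by
      rw [hu, hv, hres (xNG (k + 1)), hres (xG (k + 1)), Matrix.mulVec_smul,
        Matrix.mulVec_add]
      module
    have hmidmem : ((1:ℝ)/2) • ((xNG (k + 1) - x0) + (xG (k + 1) - x0)) ∈ krylov A r0 (k + 1) :=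
      Submodule.smul_mem _ _ (add_mem hmemNG hmemG)
    have humid : u ⬝ᵥ u ≤ (((1:ℝ)/2) • (u + v)) ⬝ᵥ (((1:ℝ)/2) • (u + v)) := by
      have hvm : norm2 v ≤ norm2 (((1:ℝ)/2) • (u + v)) := by
        rw [hmid]
        exact hGopt (k + 1) _ hmidmem
      have := (norm2_le_iff v _).mp hvm
      linarith [hdotuv]
    exact min_unique hdotuv humid

end
end

section
/- Assume A ∈ R^{n×n} is invertible and full AA, full NGMRES, and GMRES are applied to Ax = b with the same initial guess x_0 ≠ x*. Assume for some k_0 > 0 that r_{k_0−1}^G ≠ 0 and ‖r_{k−1}^G‖₂ > ‖r_k^G‖₂ for each k with 0 < k < k_0. Then for all 0 ≤ j ≤ k_0, the full NGMRES and GMRES iterates coincide, x_j^{NG} = x_j^G, and the full AA iterates satisfy x_{j+1}^A = q(x_j^{NG}) = x_j^{NG} − r_j^{NG}. -/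
open Matrix Filter

noncomputable section

variable {n : ℕ}

lemma aux_dot_self_nonneg (u : Fin n → ℝ) : 0 ≤ u ⬝ᵥ u :=
  Finset.sum_nonneg fun i _ => mul_self_nonneg (u i)

lemma aux_norm2_le_iff {u v : Fin n → ℝ} : norm2 u ≤ norm2 v ↔ u ⬝ᵥ u ≤ v ⬝ᵥ v :=
  Real.sqrt_le_sqrt_iff (aux_dot_self_nonneg v)

lemma aux_norm2_eq_zero {u : Fin n → ℝ} : norm2 u = 0 ↔ u = 0 := by
  unfold norm2
  rw [Real.sqrt_eq_zero']
  constructor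
  · intro h; exact dotProduct_self_eq_zero.mp (le_antisymm h (aux_dot_self_nonneg u))
  · rintro rfl; simp

lemma aux_min_unique (S : Submodule ℝ (Fin n → ℝ)) (c u v : Fin n → ℝ)
    (hu : u - c ∈ S) (hv : v - c ∈ S)
    (hmu : ∀ w, w - c ∈ S → norm2 u ≤ norm2 w)
    (hmv : ∀ w, w - c ∈ S → norm2 v ≤ norm2 w) : u = v := by
  set m := (2⁻¹ : ℝ) • (u + v) with hm
  have hmS : m - c ∈ S := by
    have : m - c = (2⁻¹ : ℝ) • ((u - c) + (v - c)) := by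
      rw [hm]; module
    rw [this]; exact S.smul_mem _ (S.add_mem hu hv)
  have h1 : u ⬝ᵥ u ≤ m ⬝ᵥ m := aux_norm2_le_iff.mp (hmu m hmS)
  have h2 : u ⬝ᵥ u ≤ v ⬝ᵥ v := aux_norm2_le_iff.mp (hmu v (hv))
  have h3 : v ⬝ᵥ v ≤ u ⬝ᵥ u := aux_norm2_le_iff.mp (hmv u (hu))
  have hmm : m ⬝ᵥ m = 4⁻¹ * (u⬝ᵥu + 2*(u⬝ᵥv) + v⬝ᵥv) := by
    rw [hm, smul_dotProduct, dotProduct_smul, add_dotProduct, dotProduct_add, dotProduct_add,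
      dotProduct_comm v u]
    simp [smul_eq_mul]
    ring
  have hsub : (u - v) ⬝ᵥ (u - v) = u⬝ᵥu - 2*(u⬝ᵥv) + v⬝ᵥv := by
    rw [sub_dotProduct, dotProduct_sub, dotProduct_sub, dotProduct_comm v u]
    ring
  have : (u - v) ⬝ᵥ (u - v) ≤ 0 := by rw [hsub]; rw [hmm] at h1; linarith
  have := dotProduct_self_eq_zero.mp (le_antisymm this (aux_dot_self_nonneg _))
  exact sub_eq_zero.mp this

-- krylov lemmas
variable {A : Matrix (Fin n) (Fin n) ℝ} {r0 : Fin n → ℝ}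

lemma aux_krylov_mono {k l : ℕ} (h : k ≤ l) : krylov A r0 k ≤ krylov A r0 l :=
  Submodule.span_mono fun v ⟨i, hi, hv⟩ => ⟨i, lt_of_lt_of_le hi h, hv⟩

lemma aux_krylov_zero : krylov A r0 0 = ⊥ := by
  unfold krylov
  convert Submodule.span_empty
  ext v; simp

lemma aux_mem_krylov_pow {i k : ℕ} (h : i < k) : (A ^ i).mulVec r0 ∈ krylov A r0 k :=
  Submodule.subset_span ⟨i, h, rfl⟩

lemma aux_r0_mem {k : ℕ} (h : 0 < k) : r0 ∈ krylov A r0 k := by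
  have := aux_mem_krylov_pow (A := A) (r0 := r0) h
  rwa [pow_zero, one_mulVec] at this

lemma aux_mulVec_mem_krylov {k : ℕ} {x : Fin n → ℝ} (h : x ∈ krylov A r0 k) :
    A.mulVec x ∈ krylov A r0 (k + 1) := by
  have hmap : Submodule.map A.mulVecLin (krylov A r0 k) ≤ krylov A r0 (k + 1) := by
    rw [krylov, Submodule.map_span, Submodule.span_le]
    rintro _ ⟨w, ⟨i, hi, rfl⟩, rfl⟩
    have : A.mulVecLin ((A ^ i).mulVec r0) = (A ^ (i+1)).mulVec r0 := by
      simp [mulVecLin_apply, mulVec_mulVec, pow_succ']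
    rw [this]
    exact aux_mem_krylov_pow (by omega)
  exact hmap ⟨x, h, rfl⟩

lemma aux_krylov_succ (k : ℕ) :
    krylov A r0 (k + 1) = krylov A r0 k ⊔ Submodule.span ℝ {(A ^ k).mulVec r0} := by
  rw [krylov, krylov, ← Submodule.span_union]
  congr 1
  ext v
  constructor
  · rintro ⟨i, hi, rfl⟩
    rcases Nat.lt_succ_iff_lt_or_eq.mp hi with h | rfl
    · exact Or.inl ⟨i, h, rfl⟩
    · exact Or.inr rfl
  · rintro (⟨i, hi, rfl⟩ | h)
    · exact ⟨i, by omega, rfl⟩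
    · exact ⟨k, by omega, h⟩

lemma aux_span_swap {U : Submodule ℝ (Fin n → ℝ)} {a d : Fin n → ℝ}
    (h1 : d ∈ U ⊔ Submodule.span ℝ {a}) (h2 : d ∉ U) :
    U ⊔ Submodule.span ℝ {a} = U ⊔ Submodule.span ℝ {d} := by
  rcases Submodule.mem_sup.mp h1 with ⟨y, hy, z, hz, hyz⟩
  rcases Submodule.mem_span_singleton.mp hz with ⟨c, rfl⟩
  have hc : c ≠ 0 := by
    rintro rfl
    apply h2; rw [← hyz]; simpa using hy
  apply le_antisymm
  · apply sup_le le_sup_left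
    rw [Submodule.span_le, Set.singleton_subset_iff]
    have : a = c⁻¹ • (d - y) := by
      rw [← hyz, add_sub_cancel_left, smul_smul, inv_mul_cancel₀ hc, one_smul]
    rw [this]
    exact Submodule.smul_mem _ _ (Submodule.sub_mem _
      (Submodule.mem_sup_right (Submodule.mem_span_singleton_self d)) (Submodule.mem_sup_left hy))
  · apply sup_le le_sup_left
    rw [Submodule.span_le, Set.singleton_subset_iff]
    exact h1


lemma aux_qmap_eq (A : Matrix (Fin n) (Fin n) ℝ) (b x : Fin n → ℝ) :
    qmap A b x = x - residv A b x := by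
  unfold qmap residv
  rw [sub_mulVec, one_mulVec]
  abel

lemma aux_residv_affine (A : Matrix (Fin n) (Fin n) ℝ) (b x y : Fin n → ℝ) :
    residv A b y = residv A b x + A.mulVec (y - x) := by
  unfold residv
  rw [mulVec_sub]
  abel

section GMRESFacts

variable {A : Matrix (Fin n) (Fin n) ℝ} {b x0 xstar : Fin n → ℝ}
  {xG : ℕ → Fin n → ℝ} {k0 : ℕ}

/-- residual of xG k lies in K (k+1) -/
lemma aux_rG_mem (hG : IsGMRES A b x0 xG) (k : ℕ) :
    residv A b (xG k) ∈ krylov A (residv A b x0) (k + 1) := by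
  rw [aux_residv_affine A b x0 (xG k)]
  exact Submodule.add_mem _ (aux_r0_mem (by omega))
    (aux_mulVec_mem_krylov ((hG.2 k).1))

lemma aux_rG_ne_zero (hG : IsGMRES A b x0 xG)
    (hrk0 : residv A b (xG (k0 - 1)) ≠ 0) (hk0 : 0 < k0) {k : ℕ} (hk : k < k0) :
    residv A b (xG k) ≠ 0 := by
  intro h0
  apply hrk0
  have hle := (hG.2 (k0 - 1)).2 (xG k) (aux_krylov_mono (by omega) (hG.2 k).1)
  rw [h0] at hle
  rw [← aux_norm2_eq_zero]
  have h2 : norm2 (0 : Fin n → ℝ) = 0 := aux_norm2_eq_zero.mpr rfl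
  rw [h2] at hle
  have : (0:ℝ) ≤ norm2 (residv A b (xG (k0-1))) := Real.sqrt_nonneg _
  linarith

lemma aux_xstar_notMem (hG : IsGMRES A b x0 xG) (hstar : A.mulVec xstar = b)
    (hrk0 : residv A b (xG (k0 - 1)) ≠ 0) (hk0 : 0 < k0) {k : ℕ} (hk : k < k0) :
    xstar - x0 ∉ krylov A (residv A b x0) k := by
  intro hmem
  have hle := (hG.2 k).2 xstar hmem
  have : residv A b xstar = 0 := by unfold residv; rw [hstar]; simp
  rw [this] at hle
  have h2 : norm2 (0 : Fin n → ℝ) = 0 := aux_norm2_eq_zero.mpr rfl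
  rw [h2] at hle
  have h3 : (0:ℝ) ≤ norm2 (residv A b (xG k)) := Real.sqrt_nonneg _
  exact aux_rG_ne_zero hG hrk0 hk0 hk (aux_norm2_eq_zero.mp (le_antisymm hle h3))

lemma aux_delta_notMem (hG : IsGMRES A b x0 xG)
    (hdec : ∀ k, 0 < k → k < k0 →
      norm2 (residv A b (xG k)) < norm2 (residv A b (xG (k - 1)))) {j : ℕ} (hj : j + 1 < k0) :
    xG (j + 1) - xG j ∉ krylov A (residv A b x0) j := by
  intro hmem
  have hx : xG (j+1) - x0 ∈ krylov A (residv A b x0) j := by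
    have : xG (j+1) - x0 = (xG (j+1) - xG j) + (xG j - x0) := by abel
    rw [this]
    exact Submodule.add_mem _ hmem (hG.2 j).1
  have hle := (hG.2 j).2 (xG (j+1)) hx
  have := hdec (j+1) (by omega) hj
  simp only [Nat.add_sub_cancel] at this
  linarith

lemma aux_krylov_delta (hG : IsGMRES A b x0 xG)
    (hdec : ∀ k, 0 < k → k < k0 →
      norm2 (residv A b (xG k)) < norm2 (residv A b (xG (k - 1)))) {j : ℕ} (hj : j + 1 < k0) :
    krylov A (residv A b x0) (j + 1) =
      krylov A (residv A b x0) j ⊔ Submodule.span ℝ {xG (j+1) - xG j} := by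
  rw [aux_krylov_succ]
  apply aux_span_swap
  · rw [← aux_krylov_succ]
    have : xG (j+1) - xG j = (xG (j+1) - x0) - (xG j - x0) := by abel
    rw [this]
    exact Submodule.sub_mem _ ((hG.2 (j+1)).1) (aux_krylov_mono (by omega) (hG.2 j).1)
  · exact aux_delta_notMem hG hdec hj

lemma aux_krylov_le_span_delta (hG : IsGMRES A b x0 xG)
    (hdec : ∀ k, 0 < k → k < k0 →
      norm2 (residv A b (xG k)) < norm2 (residv A b (xG (k - 1)))) {k : ℕ} (hk : k < k0) :
    krylov A (residv A b x0) k ≤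
      Submodule.span ℝ {v | ∃ j < k, v = xG (j+1) - xG j} := by
  induction k with
  | zero => rw [aux_krylov_zero]; exact bot_le
  | succ k ih =>
    rw [aux_krylov_delta hG hdec hk]
    apply sup_le
    · refine le_trans (ih (by omega)) (Submodule.span_mono ?_)
      rintro v ⟨j, hj, rfl⟩; exact ⟨j, by omega, rfl⟩
    · rw [Submodule.span_le, Set.singleton_subset_iff]
      exact Submodule.subset_span ⟨k, by omega, rfl⟩

end GMRESFacts


lemma aux_mulVec_inj {A : Matrix (Fin n) (Fin n) ℝ} (hA : IsUnit A.det) :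
    Function.Injective A.mulVec := by
  have := A.invertibleOfIsUnitDet hA
  exact A.mulVec_injective_of_invertible

lemma aux_map_eq_self {A : Matrix (Fin n) (Fin n) ℝ} (hA : IsUnit A.det)
    {W : Submodule ℝ (Fin n → ℝ)} (hle : Submodule.map A.mulVecLin W ≤ W) :
    Submodule.map A.mulVecLin W = W := by
  have h := A.invertibleOfIsUnitDet hA
  have hco : A.mulVecLin = ((A.toLinearEquiv' h :
      (Fin n → ℝ) ≃ₗ[ℝ] Fin n → ℝ) : (Fin n → ℝ) →ₗ[ℝ] Fin n → ℝ) := by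
    rw [Matrix.toLinearEquiv'_apply]
    exact LinearMap.ext fun v => by rw [Matrix.toLin'_apply, Matrix.mulVecLin_apply]
  apply Submodule.eq_of_le_of_finrank_le hle
  rw [hco, LinearEquiv.finrank_map_eq]

section GMRESCore

variable {A : Matrix (Fin n) (Fin n) ℝ} {b x0 xstar : Fin n → ℝ}
  {xG : ℕ → Fin n → ℝ} {k0 : ℕ}

lemma aux_rG_notMem (hA : IsUnit A.det) (hG : IsGMRES A b x0 xG)
    (hstar : A.mulVec xstar = b)
    (hrk0 : residv A b (xG (k0 - 1)) ≠ 0) (hk0 : 0 < k0)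
    (hdec : ∀ k, 0 < k → k < k0 →
      norm2 (residv A b (xG k)) < norm2 (residv A b (xG (k - 1)))) {k : ℕ} (hk : k < k0) :
    residv A b (xG k) ∉ krylov A (residv A b x0) k := by
  intro hmem
  rcases Nat.eq_zero_or_pos k with rfl | hkpos
  · rw [aux_krylov_zero, Submodule.mem_bot] at hmem
    exact aux_rG_ne_zero hG hrk0 hk0 hk hmem
  · -- k ≥ 1
    have hmaple : Submodule.map A.mulVecLin (krylov A (residv A b x0) k) ≤
        krylov A (residv A b x0) k := by
      calc Submodule.map A.mulVecLin (krylov A (residv A b x0) k)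
          ≤ Submodule.map A.mulVecLin
              (Submodule.span ℝ {v | ∃ j < k, v = xG (j+1) - xG j}) :=
            Submodule.map_mono (aux_krylov_le_span_delta hG hdec hk)
        _ = Submodule.span ℝ (A.mulVecLin '' {v | ∃ j < k, v = xG (j+1) - xG j}) :=
            Submodule.map_span _ _
        _ ≤ krylov A (residv A b x0) k := by
            rw [Submodule.span_le]
            rintro _ ⟨w, ⟨j, hj, rfl⟩, rfl⟩
            have hAd : A.mulVecLin (xG (j+1) - xG j) =
                residv A b (xG (j+1)) - residv A b (xG j) := by
              rw [Matrix.mulVecLin_apply, aux_residv_affine A b (xG j) (xG (j+1))]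
              abel
            rw [hAd]
            apply Submodule.sub_mem
            · rcases Nat.lt_or_ge (j+1) k with h | h
              · exact aux_krylov_mono (by omega) (aux_rG_mem hG (j+1))
              · have : j + 1 = k := by omega
                rw [this]; exact hmem
            · exact aux_krylov_mono (by omega) (aux_rG_mem hG j)
    have heq := aux_map_eq_self hA hmaple
    have hr0 : residv A b x0 ∈ krylov A (residv A b x0) k := aux_r0_mem hkpos
    rw [← heq] at hr0
    obtain ⟨s, hs, hAs⟩ := hr0
    rw [Matrix.mulVecLin_apply] at hAs
    have hxs : xstar - x0 = -s := by
      apply aux_mulVec_inj hA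
      rw [Matrix.mulVec_sub, Matrix.mulVec_neg, hAs, hstar]
      unfold residv
      abel
    apply aux_xstar_notMem hG hstar hrk0 hk0 hk
    rw [hxs]
    exact Submodule.neg_mem _ hs

lemma aux_krylov_r (hA : IsUnit A.det) (hG : IsGMRES A b x0 xG)
    (hstar : A.mulVec xstar = b)
    (hrk0 : residv A b (xG (k0 - 1)) ≠ 0) (hk0 : 0 < k0)
    (hdec : ∀ k, 0 < k → k < k0 →
      norm2 (residv A b (xG k)) < norm2 (residv A b (xG (k - 1)))) {k : ℕ} (hk : k < k0) :
    krylov A (residv A b x0) (k+1) =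
      krylov A (residv A b x0) k ⊔ Submodule.span ℝ {residv A b (xG k)} := by
  rw [aux_krylov_succ]
  apply aux_span_swap
  · rw [← aux_krylov_succ]
    exact aux_rG_mem hG k
  · exact aux_rG_notMem hA hG hstar hrk0 hk0 hdec hk

lemma aux_krylov_Mdelta (hA : IsUnit A.det) (hG : IsGMRES A b x0 xG)
    (hstar : A.mulVec xstar = b)
    (hrk0 : residv A b (xG (k0 - 1)) ≠ 0) (hk0 : 0 < k0)
    (hdec : ∀ k, 0 < k → k < k0 →
      norm2 (residv A b (xG k)) < norm2 (residv A b (xG (k - 1)))) {j : ℕ} (hj : j + 1 < k0) :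
    krylov A (residv A b x0) (j+2) =
      krylov A (residv A b x0) (j+1) ⊔
        Submodule.span ℝ {(1 - A).mulVec (xG (j+1) - xG j)} := by
  have hδ : xG (j+1) - xG j ∈ krylov A (residv A b x0) (j+1) := by
    have h1 : xG (j+1) - xG j = (xG (j+1) - x0) - (xG j - x0) := by abel
    rw [h1]
    exact Submodule.sub_mem _ ((hG.2 (j+1)).1) (aux_krylov_mono (by omega) (hG.2 j).1)
  have hM : (1 - A).mulVec (xG (j+1) - xG j) =
      (xG (j+1) - xG j) - A.mulVec (xG (j+1) - xG j) := by
    rw [Matrix.sub_mulVec, Matrix.one_mulVec]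
  rw [aux_krylov_succ]
  apply aux_span_swap
  · rw [← aux_krylov_succ, hM]
    exact Submodule.sub_mem _ (aux_krylov_mono (by omega) hδ) (aux_mulVec_mem_krylov hδ)
  · intro hmem
    rw [hM] at hmem
    have hAδ : A.mulVec (xG (j+1) - xG j) ∈ krylov A (residv A b x0) (j+1) := by
      have := Submodule.sub_mem _ hδ hmem
      simpa using this
    have hr : residv A b (xG (j+1)) ∈ krylov A (residv A b x0) (j+1) := by
      rw [aux_residv_affine A b (xG j) (xG (j+1))]
      exact Submodule.add_mem _ (aux_rG_mem hG j) hAδ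
    exact aux_rG_notMem hA hG hstar hrk0 hk0 hdec hj hr

end GMRESCore


section NGMRESEq

variable {A : Matrix (Fin n) (Fin n) ℝ} {b x0 xstar : Fin n → ℝ}
  {xNG xG : ℕ → Fin n → ℝ} {β : ℕ → ℕ → ℝ} {k0 : ℕ}

lemma aux_ngmres_eq (hA : IsUnit A.det)
    (hNG : IsNGMRES A b x0 (fun k => k) xNG β) (hG : IsGMRES A b x0 xG)
    (hstar : A.mulVec xstar = b)
    (hrk0 : residv A b (xG (k0 - 1)) ≠ 0) (hk0 : 0 < k0)
    (hdec : ∀ k, 0 < k → k < k0 →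
      norm2 (residv A b (xG k)) < norm2 (residv A b (xG (k - 1)))) :
    ∀ k ≤ k0, ∀ j ≤ k, xNG j = xG j := by
  intro k
  induction k with
  | zero =>
    intro _ j hj
    have : j = 0 := Nat.le_zero.mp hj
    rw [this, hNG.1, hG.1]
  | succ k ih =>
    intro hk1 j hj
    have hprev : ∀ j ≤ k, xNG j = xG j := ih (by omega)
    rcases Nat.lt_or_ge j (k+1) with hlt | hge
    · exact hprev j (by omega)
    have hjk : j = k + 1 := by omega
    subst hjk
    have hkk0 : k < k0 := by omega
    set K := krylov A (residv A b x0) with hK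
    set d : ℕ → (Fin n → ℝ) := fun i => qmap A b (xG k) - xG (k - i) with hd
    set T := Submodule.span ℝ (Set.range fun i : Fin (k+1) => d i) with hT
    -- update formula
    have hupdate : ∀ β' : ℕ → ℝ, ngmresUpdate A b xNG β' k k =
        qmap A b (xG k) + ∑ i ∈ Finset.range (k+1), β' i • d i := by
      intro β'
      unfold ngmresUpdate
      rw [hprev k le_rfl]
      congr 1
      apply Finset.sum_congr rfl
      intro i hi
      rw [hprev (k - i) (by omega), hd]
    -- generators in K (k+1)
    have hdiK : ∀ i : ℕ, i ≤ k → d i ∈ K (k+1) := by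
      intro i hi
      have h1 : d i = ((xG k - x0) - (xG (k-i) - x0)) - residv A b (xG k) := by
        rw [hd, aux_qmap_eq]; abel
      rw [h1]
      exact Submodule.sub_mem _ (Submodule.sub_mem _
        (aux_krylov_mono (by omega) (hG.2 k).1)
        (aux_krylov_mono (by omega) (hG.2 (k-i)).1)) (aux_rG_mem hG k)
    have hTle : T ≤ K (k+1) := by
      rw [hT, Submodule.span_le]
      rintro _ ⟨i, rfl⟩
      exact hdiK i (by omega)
    have hKleT : K (k+1) ≤ T := by
      rw [hK, aux_krylov_r hA hG hstar hrk0 hk0 hdec hkk0]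
      apply sup_le
      · refine le_trans (aux_krylov_le_span_delta hG hdec hkk0) ?_
        rw [Submodule.span_le]
        rintro _ ⟨j, hjlt, rfl⟩
        have e1 : k - (k - j) = j := by omega
        have e2 : k - (k - j - 1) = j + 1 := by omega
        have h2 : xG (j+1) - xG j = d (k - j) - d (k - j - 1) := by
          rw [hd]
          show _ = (qmap A b (xG k) - xG (k - (k-j))) - (qmap A b (xG k) - xG (k - (k-j-1)))
          rw [e1, e2]; abel
        rw [h2]
        exact Submodule.sub_mem _
          (Submodule.subset_span ⟨⟨k - j, by omega⟩, rfl⟩)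
          (Submodule.subset_span ⟨⟨k - j - 1, by omega⟩, rfl⟩)
      · rw [Submodule.span_le, Set.singleton_subset_iff]
        have h3 : residv A b (xG k) = -(d 0) := by
          rw [hd]
          show _ = -(qmap A b (xG k) - xG (k - 0))
          rw [Nat.sub_zero, aux_qmap_eq]; abel
        rw [h3]
        exact Submodule.neg_mem _ (Submodule.subset_span ⟨⟨0, by omega⟩, rfl⟩)
    have hTK : T = K (k+1) := le_antisymm hTle hKleT
    have hdk : qmap A b (xG k) = x0 + d k := by
      rw [hd]
      show _ = x0 + (qmap A b (xG k) - xG (k - k))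
      rw [Nat.sub_self, hG.1]; abel
    -- membership of the NGMRES iterate
    have hup1 := (hNG.2 k).1
    beta_reduce at hup1
    have hx1 : xNG (k+1) - x0 ∈ K (k+1) := by
      rw [hup1, hupdate (β k)]
      have h2 : qmap A b (xG k) + (∑ i ∈ Finset.range (k+1), β k i • d i) - x0 =
          d k + ∑ i ∈ Finset.range (k+1), β k i • d i := by
        rw [hdk]; abel
      rw [h2, ← hTK]
      refine Submodule.add_mem _ (Submodule.subset_span ⟨⟨k, by omega⟩, rfl⟩) ?_
      refine Submodule.sum_mem _ fun i hi => Submodule.smul_mem _ _ ?_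
      exact Submodule.subset_span ⟨⟨i, Finset.mem_range.mp hi⟩, rfl⟩
    -- minimality of the NGMRES iterate over the affine space
    have hmin : ∀ y, y - x0 ∈ K (k+1) →
        norm2 (residv A b (xNG (k+1))) ≤ norm2 (residv A b y) := by
      intro y hy
      rw [← hTK, hT] at hy
      obtain ⟨c, hc⟩ := (Submodule.mem_span_range_iff_exists_fun ℝ).mp hy
      set β' : ℕ → ℝ :=
        fun i => (if h : i < k+1 then c ⟨i, h⟩ else 0) - (if i = k then 1 else 0) with hβ'
      have hupd : ngmresUpdate A b xNG β' k k = y := by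
        rw [hupdate β']
        have hsum : ∑ i ∈ Finset.range (k+1), β' i • d i
            = (∑ i ∈ Finset.range (k+1), (if h : i < k+1 then c ⟨i,h⟩ else 0) • d i)
              - (∑ i ∈ Finset.range (k+1), (if i = k then (1:ℝ) else 0) • d i) := by
          rw [← Finset.sum_sub_distrib]
          apply Finset.sum_congr rfl
          intro i hi
          rw [hβ', sub_smul]
        have hs1 : ∑ i ∈ Finset.range (k+1), (if h : i < k+1 then c ⟨i,h⟩ else 0) • d i
            = y - x0 := by
          rw [← hc, ← Fin.sum_univ_eq_sum_range
            (fun i => (if h : i < k+1 then c ⟨i,h⟩ else 0) • d i) (k+1)]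
          apply Finset.sum_congr rfl
          intro i _
          rw [dif_pos i.isLt]
        have hs2 : ∑ i ∈ Finset.range (k+1), (if i = k then (1:ℝ) else 0) • d i = d k := by
          have : ∀ i, (if i = k then (1:ℝ) else 0) • d i = if i = k then d i else 0 := by
            intro i; split <;> simp
          simp_rw [this]
          rw [Finset.sum_ite_eq' (Finset.range (k+1)) k d]
          simp
        rw [hsum, hs1, hs2, hdk]
        abel
      have hle := (hNG.2 k).2 β'
      beta_reduce at hle
      rwa [hupd] at hle
    -- the GMRES iterate also minimizes
    have hx2 : xG (k+1) - x0 ∈ K (k+1) := (hG.2 (k+1)).1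
    have hmin2 : ∀ y, y - x0 ∈ K (k+1) →
        norm2 (residv A b (xG (k+1))) ≤ norm2 (residv A b y) := fun y hy => (hG.2 (k+1)).2 y hy
    -- uniqueness of the residual minimizer
    have hres : residv A b (xNG (k+1)) = residv A b (xG (k+1)) := by
      apply aux_min_unique (Submodule.map A.mulVecLin (K (k+1))) (residv A b x0)
      · rw [aux_residv_affine A b x0 (xNG (k+1)), add_sub_cancel_left]
        exact ⟨_, hx1, rfl⟩
      · rw [aux_residv_affine A b x0 (xG (k+1)), add_sub_cancel_left]
        exact ⟨_, hx2, rfl⟩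
      · intro w hw
        obtain ⟨s, hs, hAs⟩ := hw
        have hws : w = residv A b (x0 + s) := by
          rw [aux_residv_affine A b x0 (x0 + s), add_sub_cancel_left]
          rw [Matrix.mulVecLin_apply] at hAs
          rw [hAs]; abel
        rw [hws]
        exact hmin (x0 + s) (by rwa [add_sub_cancel_left])
      · intro w hw
        obtain ⟨s, hs, hAs⟩ := hw
        have hws : w = residv A b (x0 + s) := by
          rw [aux_residv_affine A b x0 (x0 + s), add_sub_cancel_left]
          rw [Matrix.mulVecLin_apply] at hAs
          rw [hAs]; abel
        rw [hws]
        exact hmin2 (x0 + s) (by rwa [add_sub_cancel_left])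
    unfold residv at hres
    exact aux_mulVec_inj hA (by rwa [sub_left_inj] at hres)

end NGMRESEq


section AAEq

variable {A : Matrix (Fin n) (Fin n) ℝ} {b x0 xstar : Fin n → ℝ}
  {xG xA : ℕ → Fin n → ℝ} {γ : ℕ → ℕ → ℝ} {k0 : ℕ}

lemma aux_qmap_sub (A : Matrix (Fin n) (Fin n) ℝ) (b u v : Fin n → ℝ) :
    qmap A b u - qmap A b v = (1 - A).mulVec (u - v) := by
  unfold qmap
  rw [Matrix.mulVec_sub]
  abel

lemma aux_aa_eq (hA : IsUnit A.det) (hG : IsGMRES A b x0 xG)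
    (hAA : IsAA A b x0 (fun k => k) xA γ)
    (hstar : A.mulVec xstar = b)
    (hrk0 : residv A b (xG (k0 - 1)) ≠ 0) (hk0 : 0 < k0)
    (hdec : ∀ k, 0 < k → k < k0 →
      norm2 (residv A b (xG k)) < norm2 (residv A b (xG (k - 1)))) :
    ∀ k ≤ k0, xA (k + 1) = qmap A b (xG k) := by
  intro k
  induction k using Nat.strong_induction_on with
  | _ k ih =>
  intro hkk0
  rcases Nat.eq_zero_or_pos k with rfl | hkpos
  · have h := (hAA.2 0).1
    beta_reduce at h
    rw [h]
    unfold aaUpdate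
    simp [hAA.1, hG.1]
  -- k ≥ 1
  set K := krylov A (residv A b x0) with hK
  set w : (ℕ → ℝ) → (Fin n → ℝ) :=
    fun g => xA k + ∑ i ∈ Finset.Icc 1 k, g i • (xA k - xA (k - i)) with hw
  -- the AA update is qmap of the combination
  have h1 : ∀ g : ℕ → ℝ, aaUpdate A b xA g k k = qmap A b (w g) := by
    intro g
    have hsum : (1 - A).mulVec (∑ i ∈ Finset.Icc 1 k, g i • (xA k - xA (k - i)))
        = ∑ i ∈ Finset.Icc 1 k, g i • (1 - A).mulVec (xA k - xA (k - i)) := by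
      show (1 - A).mulVecLin _ = _
      rw [map_sum]
      apply Finset.sum_congr rfl
      intro i _
      rw [LinearMap.map_smul, Matrix.mulVecLin_apply]
    calc aaUpdate A b xA g k k
        = qmap A b (xA k) + ∑ i ∈ Finset.Icc 1 k,
            g i • (1 - A).mulVec (xA k - xA (k - i)) := by
          unfold aaUpdate
          congr 1
          apply Finset.sum_congr rfl
          intro i _
          rw [aux_qmap_sub]
      _ = qmap A b (w g) := by
          rw [hw]
          show _ = qmap A b (xA k + _)
          unfold qmap
          rw [Matrix.mulVec_add, hsum]
          abel
  -- the AA objective is the residual of the combination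
  have h2 : ∀ g : ℕ → ℝ, aaObj A b xA g k k = residv A b (w g) := by
    intro g
    have hsum : A.mulVec (∑ i ∈ Finset.Icc 1 k, g i • (xA k - xA (k - i)))
        = ∑ i ∈ Finset.Icc 1 k, g i • A.mulVec (xA k - xA (k - i)) := by
      show A.mulVecLin _ = _
      rw [map_sum]
      apply Finset.sum_congr rfl
      intro i _
      rw [LinearMap.map_smul, Matrix.mulVecLin_apply]
    calc aaObj A b xA g k k
        = residv A b (xA k) + ∑ i ∈ Finset.Icc 1 k,
            g i • A.mulVec (xA k - xA (k - i)) := by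
          unfold aaObj
          congr 1
          apply Finset.sum_congr rfl
          intro i _
          congr 1
          rw [aux_residv_affine A b (xA (k - i)) (xA k)]
          abel
      _ = residv A b (w g) := by
          rw [hw]
          show _ = residv A b (xA k + _)
          rw [aux_residv_affine A b (xA k) (xA k + _), add_sub_cancel_left, hsum]
  -- membership of AA iterates
  have h3 : ∀ j ≤ k, xA j - x0 ∈ K j := by
    intro j hj
    match j with
    | 0 => rw [hAA.1, sub_self]; exact Submodule.zero_mem _
    | (m+1) =>
      have hm := ih m (by omega) (by omega)
      rw [hm, aux_qmap_eq]
      have : xG m - residv A b (xG m) - x0 = (xG m - x0) - residv A b (xG m) := by abel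
      rw [this]
      exact Submodule.sub_mem _ (aux_krylov_mono (by omega) (hG.2 m).1) (aux_rG_mem hG m)
  -- the span of the AA directions is the Krylov space
  have hterm : ∀ m ≤ k, xA k - xA m ∈
      Submodule.span ℝ (Set.range fun i : Fin k => xA k - xA (k - (1 + (i : ℕ)))) := by
    intro m hm
    rcases eq_or_lt_of_le hm with rfl | hmlt
    · rw [sub_self]; exact Submodule.zero_mem _
    · refine Submodule.subset_span ⟨⟨k - m - 1, by omega⟩, ?_⟩
      show xA k - xA (k - (1 + (k - m - 1))) = xA k - xA m
      rw [show k - (1 + (k - m - 1)) = m by omega]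
  have hwj : ∀ j < k, xA (j+1) - xA j ∈
      Submodule.span ℝ (Set.range fun i : Fin k => xA k - xA (k - (1 + (i : ℕ)))) := by
    intro j hj
    have : xA (j+1) - xA j = (xA k - xA j) - (xA k - xA (j+1)) := by abel
    rw [this]
    exact Submodule.sub_mem _ (hterm j (by omega)) (hterm (j+1) (by omega))
  have hU : Submodule.span ℝ (Set.range fun i : Fin k => xA k - xA (k - (1 + (i : ℕ)))) = K k := by
    apply le_antisymm
    · rw [Submodule.span_le]
      rintro _ ⟨i, rfl⟩
      beta_reduce
      have hident : xA k - xA (k - (1 + (i:ℕ))) =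
          (xA k - x0) - (xA (k - (1 + (i:ℕ))) - x0) := by abel
      rw [hident]
      exact Submodule.sub_mem _ (h3 k le_rfl)
        (aux_krylov_mono (by omega) (h3 (k - (1 + (i:ℕ))) (by omega)))
    · have haux : ∀ m ≤ k, K m ≤
          Submodule.span ℝ (Set.range fun i : Fin k => xA k - xA (k - (1 + (i : ℕ)))) := by
        intro m
        induction m with
        | zero => intro _; rw [hK, aux_krylov_zero]; exact bot_le
        | succ m ihm =>
          intro hm1
          match m, ihm with
          | 0, _ =>
            rw [hK, aux_krylov_succ 0]
            apply sup_le
            · rw [aux_krylov_zero]; exact bot_le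
            · rw [Submodule.span_le, Set.singleton_subset_iff, pow_zero, Matrix.one_mulVec]
              have hx1 : xA 1 = qmap A b (xG 0) := ih 0 (by omega) (by omega)
              have : residv A b x0 = -(xA 1 - xA 0) := by
                rw [hx1, hAA.1, hG.1, aux_qmap_eq]
                abel
              rw [this]
              exact Submodule.neg_mem _ (hwj 0 hkpos)
          | (m'+1), ihm =>
            rw [hK, aux_krylov_Mdelta hA hG hstar hrk0 hk0 hdec (show m'+1 < k0 by omega)]
            apply sup_le
            · exact le_trans (le_of_eq (by rw [hK])) (ihm (by omega))
            · rw [Submodule.span_le, Set.singleton_subset_iff]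
              have hm1' : xA (m'+2) = qmap A b (xG (m'+1)) := ih (m'+1) (by omega) (by omega)
              have hm2' : xA (m'+1) = qmap A b (xG m') := ih m' (by omega) (by omega)
              have : (1 - A).mulVec (xG (m'+1) - xG m') = xA (m'+2) - xA (m'+1) := by
                rw [hm1', hm2', aux_qmap_sub]
              rw [this]
              exact hwj (m'+1) (by omega)
      exact haux k le_rfl
  -- membership of w (γ k)
  have heK : ∀ i ∈ Finset.Icc 1 k, xA k - xA (k - i) ∈ K k := by
    intro i hi
    have : xA k - xA (k - i) = (xA k - x0) - (xA (k - i) - x0) := by abel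
    rw [this]
    exact Submodule.sub_mem _ (h3 k le_rfl) (aux_krylov_mono (by omega) (h3 (k-i) (by omega)))
  have hx1 : w (γ k) - x0 ∈ K k := by
    rw [hw]
    show xA k + _ - x0 ∈ K k
    have : xA k + (∑ i ∈ Finset.Icc 1 k, γ k i • (xA k - xA (k - i))) - x0
        = (xA k - x0) + ∑ i ∈ Finset.Icc 1 k, γ k i • (xA k - xA (k - i)) := by abel
    rw [this]
    exact Submodule.add_mem _ (h3 k le_rfl)
      (Submodule.sum_mem _ fun i hi => Submodule.smul_mem _ _ (heK i hi))
  -- minimality of w (γ k)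
  have hmin : ∀ y, y - x0 ∈ K k →
      norm2 (residv A b (w (γ k))) ≤ norm2 (residv A b y) := by
    intro y hy
    have hyk : y - xA k ∈ K k := by
      have : y - xA k = (y - x0) - (xA k - x0) := by abel
      rw [this]
      exact Submodule.sub_mem _ hy (h3 k le_rfl)
    rw [← hU] at hyk
    obtain ⟨c, hc⟩ := (Submodule.mem_span_range_iff_exists_fun ℝ).mp hyk
    set g : ℕ → ℝ := fun i => if h : 1 ≤ i ∧ i ≤ k then c ⟨i - 1, by omega⟩ else 0 with hg
    have hwg : w g = y := by
      rw [hw]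
      show xA k + ∑ i ∈ Finset.Icc 1 k, g i • (xA k - xA (k - i)) = y
      have hicc : ∑ i ∈ Finset.Icc 1 k, g i • (xA k - xA (k - i))
          = ∑ i ∈ Finset.range k, g (1 + i) • (xA k - xA (k - (1 + i))) := by
        rw [← Finset.Ico_add_one_right_eq_Icc, Finset.sum_Ico_eq_sum_range]
        simp
      have hfin : ∑ i ∈ Finset.range k, g (1 + i) • (xA k - xA (k - (1 + i)))
          = ∑ i : Fin k, c i • (xA k - xA (k - (1 + (i:ℕ)))) := by
        rw [← Fin.sum_univ_eq_sum_range (fun i => g (1 + i) • (xA k - xA (k - (1 + i)))) k]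
        apply Finset.sum_congr rfl
        intro i _
        congr 1
        have hcond : 1 ≤ 1 + (i:ℕ) ∧ 1 + (i:ℕ) ≤ k := ⟨by omega, by omega⟩
        simp only [hg]
        rw [dif_pos hcond]
        congr 1
        refine Fin.ext ?_
        show 1 + (i:ℕ) - 1 = (i:ℕ)
        omega
      rw [hicc, hfin, hc]
      abel
    have hle := (hAA.2 k).2 g
    beta_reduce at hle
    rw [h2 (γ k), h2 g, hwg] at hle
    exact hle
  -- uniqueness of the residual minimizer
  have hres : residv A b (w (γ k)) = residv A b (xG k) := by
    apply aux_min_unique (Submodule.map A.mulVecLin (K k)) (residv A b x0)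
    · rw [aux_residv_affine A b x0 (w (γ k)), add_sub_cancel_left]
      exact ⟨_, hx1, rfl⟩
    · rw [aux_residv_affine A b x0 (xG k), add_sub_cancel_left]
      exact ⟨_, (hG.2 k).1, rfl⟩
    · intro v hv
      obtain ⟨s, hs, hAs⟩ := hv
      have hvs : v = residv A b (x0 + s) := by
        rw [aux_residv_affine A b x0 (x0 + s), add_sub_cancel_left]
        rw [Matrix.mulVecLin_apply] at hAs
        rw [hAs]; abel
      rw [hvs]
      exact hmin (x0 + s) (by rwa [add_sub_cancel_left])
    · intro v hv
      obtain ⟨s, hs, hAs⟩ := hv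
      have hvs : v = residv A b (x0 + s) := by
        rw [aux_residv_affine A b x0 (x0 + s), add_sub_cancel_left]
        rw [Matrix.mulVecLin_apply] at hAs
        rw [hAs]; abel
      rw [hvs]
      exact (hG.2 k).2 (x0 + s) (by rwa [add_sub_cancel_left])
  have hwx : w (γ k) = xG k := by
    unfold residv at hres
    exact aux_mulVec_inj hA (by rwa [sub_left_inj] at hres)
  have hstep := (hAA.2 k).1
  beta_reduce at hstep
  rw [hstep, h1 (γ k), hwx]

end AAEq


/-- with `A` invertible, full NGMRES and GMRES iterates coincide up to `k0`,
and the full AA iterates satisfy `x_{j+1}^A = q(x_j^{NG}) = x_j^{NG} - r_j^{NG}`. -/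
theorem stmt3 (n : ℕ) (A : Matrix (Fin n) (Fin n) ℝ) (b x0 xstar : Fin n → ℝ)
    (hA : IsUnit A.det)
    (xNG xG xA : ℕ → Fin n → ℝ) (β γ : ℕ → ℕ → ℝ)
    (hNG : IsNGMRES A b x0 (fun k => k) xNG β)
    (hG : IsGMRES A b x0 xG)
    (hAA : IsAA A b x0 (fun k => k) xA γ)
    (hstar : A.mulVec xstar = b) (hx0 : x0 ≠ xstar)
    (k0 : ℕ) (hk0 : 0 < k0)
    (hrk0 : residv A b (xG (k0 - 1)) ≠ 0)
    (hdec : ∀ k, 0 < k → k < k0 →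
      norm2 (residv A b (xG k)) < norm2 (residv A b (xG (k - 1)))) :
    ∀ j ≤ k0, xNG j = xG j ∧
      xA (j + 1) = qmap A b (xNG j) ∧
      qmap A b (xNG j) = xNG j - residv A b (xNG j) := by
  intro j hj
  have hng : xNG j = xG j := aux_ngmres_eq hA hNG hG hstar hrk0 hk0 hdec k0 le_rfl j hj
  refine ⟨hng, ?_, aux_qmap_eq A b (xNG j)⟩
  rw [hng]
  exact aux_aa_eq hA hG hAA hstar hrk0 hk0 hdec j hj

end
end

section
/- Let A = P − N with P ∈ R^{n×n} nonsingular, and consider GMRES applied to the left-preconditioned system P^{−1}Ax = P^{−1}b. Define r_{j,pr} = P^{−1}A x_j − P^{−1}b. Let full NGMRES be applied to accelerate the fixed-point iteration q_{pr}(x) = (I − P^{−1}A)x + P^{−1}b. Assume full AA, full NGMRES, and GMRES use the same initial guess x_0 ≠ x*, and for some k_0 > 0 the preconditioned NGMRES residuals satisfy r_{k_0−1,pr}^{NG} ≠ 0 and ‖r_{k−1,pr}^{NG}‖₂ > ‖r_{k,pr}^{NG}‖₂ for each k with 0 < k < k_0. Then r_j^{NG} = r_j^G for 0 ≤ j ≤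 k_0; moreover, if A is invertible, then x_j^{NG} = x_j^G and x_{j+1}^A = q_{pr}(x_j^{NG}) = x_j^{NG} − r_{j,pr}^{NG} for 0 ≤ j ≤ k_0. -/
open Matrix Filter

noncomputable section

namespace StmtAux
variable {n : ℕ}
lemma dot_self_nonneg (v : Fin n → ℝ) : 0 ≤ v ⬝ᵥ v :=
  Finset.sum_nonneg fun _ _ => mul_self_nonneg _
lemma norm2_le_dot {a m : Fin n → ℝ} (h : norm2 a ≤ norm2 m) : a ⬝ᵥ a ≤ m ⬝ᵥ m :=
  (Real.sqrt_le_sqrt_iff (dot_self_nonneg m)).mp h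
lemma midpoint_unique {a b : Fin n → ℝ}
    (h1 : norm2 a ≤ norm2 ((1/2 : ℝ) • (a + b)))
    (h2 : norm2 b ≤ norm2 ((1/2 : ℝ) • (a + b))) : a = b := by
  have ha := norm2_le_dot h1
  have hb := norm2_le_dot h2
  have hm : ((1/2 : ℝ) • (a + b)) ⬝ᵥ ((1/2 : ℝ) • (a + b)) = (1/4) * ((a+b) ⬝ᵥ (a+b)) := by
    rw [smul_dotProduct, dotProduct_smul]; simp only [smul_eq_mul]; ring
  have key : (a - b) ⬝ᵥ (a - b) + (a + b) ⬝ᵥ (a + b) = 2*(a ⬝ᵥ a) + 2*(b ⬝ᵥ b) := by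
    simp only [dotProduct, Pi.add_apply, Pi.sub_apply, Finset.mul_sum, ← Finset.sum_add_distrib]
    exact Finset.sum_congr rfl fun i _ => by ring
  have h0 : (a - b) ⬝ᵥ (a - b) ≤ 0 := by nlinarith
  have h0' : (a - b) ⬝ᵥ (a - b) = 0 := le_antisymm h0 (dot_self_nonneg _)
  exact sub_eq_zero.mp (dotProduct_self_eq_zero.mp h0')
lemma residv_eq_res0 (A : Matrix (Fin n) (Fin n) ℝ) (b x x0 : Fin n → ℝ) :
    residv A b x = residv A b x0 + A.mulVec (x - x0) := by
  simp only [residv, Matrix.mulVec_sub]; abel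
lemma qmap_eq (A : Matrix (Fin n) (Fin n) ℝ) (b x : Fin n → ℝ) :
    qmap A b x = x - residv A b x := by
  simp only [qmap, residv, Matrix.sub_mulVec, Matrix.one_mulVec]; abel
lemma krylov_mono (A : Matrix (Fin n) (Fin n) ℝ) (r0 : Fin n → ℝ) {j k : ℕ} (h : j ≤ k) :
    krylov A r0 j ≤ krylov A r0 k :=
  Submodule.span_mono (by rintro v ⟨i, hi, rfl⟩; exact ⟨i, lt_of_lt_of_le hi h, rfl⟩)
lemma pow_mem_krylov (A : Matrix (Fin n) (Fin n) ℝ) (r0 : Fin n → ℝ) {i k : ℕ} (h : i < k) :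
    (A^i).mulVec r0 ∈ krylov A r0 k :=
  Submodule.subset_span ⟨i, h, rfl⟩
lemma r0_mem_krylov (A : Matrix (Fin n) (Fin n) ℝ) (r0 : Fin n → ℝ) {k : ℕ} (h : 0 < k) :
    r0 ∈ krylov A r0 k := by
  have := pow_mem_krylov A r0 h
  rwa [pow_zero, Matrix.one_mulVec] at this
lemma mulVec_mem_krylov {A : Matrix (Fin n) (Fin n) ℝ} {r0 : Fin n → ℝ} {k : ℕ} {v : Fin n → ℝ}
    (h : v ∈ krylov A r0 k) : A.mulVec v ∈ krylov A r0 (k+1) := by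
  induction h using Submodule.span_induction with
  | mem x hx =>
    obtain ⟨i, hi, rfl⟩ := hx
    rw [Matrix.mulVec_mulVec, ← pow_succ']
    exact pow_mem_krylov _ _ (Nat.succ_lt_succ hi)
  | zero => rw [Matrix.mulVec_zero]; exact Submodule.zero_mem _
  | add x y _ _ hx hy => rw [Matrix.mulVec_add]; exact Submodule.add_mem _ hx hy
  | smul c x _ hx => rw [Matrix.mulVec_smul]; exact Submodule.smul_mem _ _ hx
lemma krylov_succ (A : Matrix (Fin n) (Fin n) ℝ) (r0 : Fin n → ℝ) (k : ℕ) :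
    krylov A r0 (k+1) = krylov A r0 k ⊔ (Submodule.span ℝ {(A^k).mulVec r0}) := by
  unfold krylov
  rw [← Submodule.span_union]
  congr 1
  ext v
  simp only [Set.mem_setOf_eq, Set.mem_union, Set.mem_singleton_iff, Nat.lt_succ_iff_lt_or_eq]
  constructor
  · rintro ⟨i, hi | rfl, rfl⟩
    · exact Or.inl ⟨i, hi, rfl⟩
    · exact Or.inr rfl
  · rintro (⟨i, hi, rfl⟩ | rfl)
    · exact ⟨i, Or.inl hi, rfl⟩
    · exact ⟨k, Or.inr rfl, rfl⟩
lemma mem_krylov_succ {A : Matrix (Fin n) (Fin n) ℝ} {r0 : Fin n → ℝ} {k : ℕ} {v : Fin n → ℝ}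
    (h : v ∈ krylov A r0 (k+1)) :
    ∃ u ∈ krylov A r0 k, ∃ a : ℝ, v = u + a • (A^k).mulVec r0 := by
  rw [krylov_succ] at h
  obtain ⟨u, hu, w, hw, rfl⟩ := Submodule.mem_sup.mp h
  obtain ⟨a, rfl⟩ := Submodule.mem_span_singleton.mp hw
  exact ⟨u, hu, a, rfl⟩
lemma mem_span_family_iff {m : ℕ} (g : ℕ → (Fin n → ℝ)) (w : Fin n → ℝ) :
    w ∈ Submodule.span ℝ (Set.range (fun i : Fin m => g i)) ↔
      ∃ β : ℕ → ℝ, w = ∑ i ∈ Finset.range m, β i • g i := by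
  rw [Submodule.mem_span_range_iff_exists_fun]
  constructor
  · rintro ⟨c, hc⟩
    refine ⟨fun i => if h : i < m then c ⟨i, h⟩ else 0, ?_⟩
    rw [← hc, ← Fin.sum_univ_eq_sum_range]
    exact Finset.sum_congr rfl fun i _ => by
      show c i • g ↑i = (if h : (i:ℕ) < m then c ⟨i, h⟩ else 0) • g ↑i
      rw [dif_pos i.isLt, Fin.eta]
  · rintro ⟨β, rfl⟩
    exact ⟨fun i => β i, (Fin.sum_univ_eq_sum_range (fun i => β i • g i) m)⟩
lemma mulVec_finsum {ι : Type*} (A : Matrix (Fin n) (Fin n) ℝ) (s : Finset ι)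
    (f : ι → (Fin n → ℝ)) : A.mulVec (∑ i ∈ s, f i) = ∑ i ∈ s, A.mulVec (f i) := by
  simp only [← Matrix.mulVecLin_apply, map_sum]
lemma min_residual_unique (A : Matrix (Fin n) (Fin n) ℝ) (b x0 : Fin n → ℝ)
    (K : Submodule ℝ (Fin n → ℝ)) {y z : Fin n → ℝ}
    (hy : y - x0 ∈ K) (hz : z - x0 ∈ K)
    (hymin : ∀ w, w - x0 ∈ K → norm2 (residv A b y) ≤ norm2 (residv A b w))
    (hzmin : ∀ w, w - x0 ∈ K → norm2 (residv A b z) ≤ norm2 (residv A b w)) :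
    residv A b y = residv A b z := by
  set w := (1/2 : ℝ) • (y + z) with hwdef
  have hw : w - x0 ∈ K := by
    have h2 : w - x0 = (1/2:ℝ) • ((y - x0) + (z - x0)) := by
      rw [hwdef]; module
    rw [h2]; exact K.smul_mem _ (K.add_mem hy hz)
  have hres : residv A b w = (1/2:ℝ) • (residv A b y + residv A b z) := by
    funext i
    simp only [residv, hwdef, Matrix.mulVec_smul, Matrix.mulVec_add, Pi.smul_apply,
      Pi.add_apply, Pi.sub_apply, smul_eq_mul]
    ring
  refine midpoint_unique ?_ ?_
  · rw [← hres]; exact hymin w hw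
  · rw [← hres]; exact hzmin w hw
end StmtAux

open StmtAux

/-- the left-preconditioned version.  With `A = P - N`, `P` nonsingular, full
NGMRES and full AA applied to `q_pr(x) = (I - P⁻¹A)x + P⁻¹b` and GMRES applied to
`P⁻¹A x = P⁻¹ b`, the preconditioned residuals of NGMRES and GMRES coincide up to `k0`;
if `A` is invertible the iterates coincide and AA satisfies
`x_{j+1}^A = q_pr(x_j^{NG}) = x_j^{NG} - r_{j,pr}^{NG}`. -/

theorem stmt5 (n : ℕ) (A P N : Matrix (Fin n) (Fin n) ℝ) (b x0 xstar : Fin n → ℝ)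
    (hP : IsUnit P.det) (hPN : A = P - N)
    (xNG xG xA : ℕ → Fin n → ℝ) (β γ : ℕ → ℕ → ℝ)
    (hNG : IsNGMRES (P⁻¹ * A) (P⁻¹.mulVec b) x0 (fun k => k) xNG β)
    (hG : IsGMRES (P⁻¹ * A) (P⁻¹.mulVec b) x0 xG)
    (hAA : IsAA (P⁻¹ * A) (P⁻¹.mulVec b) x0 (fun k => k) xA γ)
    (hstar : A.mulVec xstar = b) (hx0 : x0 ≠ xstar)
    (k0 : ℕ) (hk0 : 0 < k0)
    (hrk0 : residv (P⁻¹ * A) (P⁻¹.mulVec b) (xNG (k0 - 1)) ≠ 0)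
    (hdec : ∀ k, 0 < k → k < k0 →
      norm2 (residv (P⁻¹ * A) (P⁻¹.mulVec b) (xNG k)) <
        norm2 (residv (P⁻¹ * A) (P⁻¹.mulVec b) (xNG (k - 1)))) :
    (∀ j ≤ k0,
      residv (P⁻¹ * A) (P⁻¹.mulVec b) (xNG j) = residv (P⁻¹ * A) (P⁻¹.mulVec b) (xG j)) ∧
    (IsUnit A.det → ∀ j ≤ k0, xNG j = xG j ∧
      xA (j + 1) = qmap (P⁻¹ * A) (P⁻¹.mulVec b) (xNG j) ∧
      qmap (P⁻¹ * A) (P⁻¹.mulVec b) (xNG j)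
        = xNG j - residv (P⁻¹ * A) (P⁻¹.mulVec b) (xNG j)) := by
  classical
  set M : Matrix (Fin n) (Fin n) ℝ := P⁻¹ * A with hMdef
  set c : Fin n → ℝ := P⁻¹.mulVec b with hcdef
  set r0 : Fin n → ℝ := residv M c x0 with hr0def
  obtain ⟨hNG0, hNGstep⟩ := hNG
  obtain ⟨hG0, hGstep⟩ := hG
  obtain ⟨hA0, hAstep⟩ := hAA
  have hresid : ∀ y : Fin n → ℝ, residv M c y = r0 + M.mulVec (y - x0) :=
    fun y => residv_eq_res0 M c y x0
  -- ============ main induction ============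
  have main : ∀ k, k ≤ k0 →
      (∀ j ≤ k, xNG j - x0 ∈ krylov M r0 j) ∧
      (∀ j ≤ k, ∀ y, y - x0 ∈ krylov M r0 j →
        norm2 (residv M c (xNG j)) ≤ norm2 (residv M c y)) ∧
      (∀ j ≤ k, j < k0 →
        krylov M r0 j ≤ Submodule.span ℝ (Set.range (fun i : Fin (j+1) => xNG i - x0))) := by
    intro k
    induction k with
    | zero =>
      intro _
      have hK0 : krylov M r0 0 = ⊥ := by
        unfold krylov
        convert Submodule.span_empty
        ext v; simp
      refine ⟨?_, ?_, ?_⟩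
      · intro j hj
        interval_cases j
        rw [hNG0, sub_self]; exact Submodule.zero_mem _
      · intro j hj y hy
        interval_cases j
        rw [hK0, Submodule.mem_bot, sub_eq_zero] at hy
        rw [hy, hNG0]
      · intro j hj _
        interval_cases j
        rw [hK0]; exact bot_le
    | succ k ih =>
      intro hk1
      have hkk0 : k < k0 := hk1
      obtain ⟨C1, C2, C3⟩ := ih (le_of_lt hkk0)
      set q : Fin n → ℝ := qmap M c (xNG k) with hqdef
      set rk : Fin n → ℝ := residv M c (xNG k) with hrkdef
      have hq : q = xNG k - rk := qmap_eq M c (xNG k)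
      set V : Submodule ℝ (Fin n → ℝ) :=
        Submodule.span ℝ (Set.range (fun i : Fin (k+1) => q - xNG (k - (i:ℕ)))) with hVdef
      have hgen : ∀ i : Fin (k+1), q - xNG (k - (i:ℕ)) ∈ V :=
        fun i => Submodule.subset_span ⟨i, rfl⟩
      have hrkV : rk ∈ V := by
        have h0 := hgen ⟨0, Nat.succ_pos k⟩
        simp only [Nat.sub_zero] at h0
        have he : rk = -(q - xNG k) := by rw [hq]; abel
        rw [he]; exact V.neg_mem h0
      have hdiff : ∀ i : Fin (k+1), xNG k - xNG (k - (i:ℕ)) ∈ V := by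
        intro i
        have h1 := hgen i
        have h2 := hgen ⟨0, Nat.succ_pos k⟩
        simp only [Nat.sub_zero] at h2
        have he : xNG k - xNG (k - (i:ℕ)) = (q - xNG (k - (i:ℕ))) - (q - xNG k) := by abel
        rw [he]; exact V.sub_mem h1 h2
      have hxk0V : xNG k - x0 ∈ V := by
        have h := hdiff ⟨k, Nat.lt_succ_self k⟩
        simp only [Nat.sub_self] at h
        rwa [hNG0] at h
      have hSV : ∀ j ≤ k, xNG j - x0 ∈ V := by
        intro j hj
        have h1 := hdiff ⟨k - j, by omega⟩
        simp only at h1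
        rw [show k - (k - j) = j by omega] at h1
        have he : xNG j - x0 = (xNG k - x0) - (xNG k - xNG j) := by abel
        rw [he]; exact V.sub_mem hxk0V h1
      have hrk_mem : rk ∈ krylov M r0 (k+1) := by
        rw [hrkdef, hresid (xNG k)]
        exact Submodule.add_mem _ (r0_mem_krylov M r0 (Nat.succ_pos k))
          (mulVec_mem_krylov (C1 k le_rfl))
      have hq0 : q - x0 ∈ krylov M r0 (k+1) := by
        have he : q - x0 = (xNG k - x0) - rk := by rw [hq]; abel
        rw [he]
        exact Submodule.sub_mem _ (krylov_mono M r0 (Nat.le_succ k) (C1 k le_rfl)) hrk_mem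
      have hVK : V ≤ krylov M r0 (k+1) := by
        rw [hVdef, Submodule.span_le]
        rintro v ⟨i, rfl⟩
        have he : q - xNG (k - (i:ℕ)) = (q - x0) - (xNG (k - (i:ℕ)) - x0) := by abel
        simp only
        rw [he]
        exact Submodule.sub_mem _ hq0
          (krylov_mono M r0 (by omega) (C1 (k - (i:ℕ)) (by omega)))
      have hKkV : krylov M r0 k ≤ V := by
        refine le_trans (C3 k le_rfl hkk0) ?_
        rw [Submodule.span_le]
        rintro v ⟨i, rfl⟩
        exact hSV i (Nat.lt_succ_iff.mp i.isLt)
      have hMkV : (M^k).mulVec r0 ∈ V := by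
        rcases Nat.eq_zero_or_pos k with hk0' | hkpos
        · subst hk0'
          have : rk = r0 := by rw [hrkdef, hr0def, hNG0]
          rw [pow_zero, Matrix.one_mulVec, ← this]
          exact hrkV
        · obtain ⟨k', rfl⟩ : ∃ k', k = k' + 1 := ⟨k - 1, by omega⟩
          obtain ⟨u, hu, a, hxu⟩ := mem_krylov_succ (C1 (k'+1) le_rfl)
          by_cases ha : a = 0
          · exfalso
            have hxk : xNG (k'+1) - x0 ∈ krylov M r0 k' := by
              rw [hxu, ha, zero_smul, add_zero]; exact hu
            have hle := C2 k' (Nat.le_succ k') (xNG (k'+1)) hxk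
            have hlt := hdec (k'+1) (Nat.succ_pos _) hkk0
            simp only [Nat.add_sub_cancel] at hlt
            exact absurd hle (not_le.mpr hlt)
          · have hMx : M.mulVec (xNG (k'+1) - x0) ∈ V := by
              have he : M.mulVec (xNG (k'+1) - x0) = rk - r0 := by
                rw [hrkdef, hresid (xNG (k'+1))]; abel
              rw [he]
              exact V.sub_mem hrkV (hKkV (r0_mem_krylov M r0 (Nat.succ_pos k')))
            have hMu : M.mulVec u ∈ V := hKkV (mulVec_mem_krylov hu)
            have heq : a • (M^(k'+1)).mulVec r0
                = M.mulVec (xNG (k'+1) - x0) - M.mulVec u := by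
              rw [hxu, Matrix.mulVec_add, Matrix.mulVec_smul, Matrix.mulVec_mulVec,
                ← pow_succ']
              abel
            have hmem : a • (M^(k'+1)).mulVec r0 ∈ V := by
              rw [heq]; exact V.sub_mem hMx hMu
            have := V.smul_mem a⁻¹ hmem
            rwa [smul_smul, inv_mul_cancel₀ ha, one_smul] at this
      have hKV : krylov M r0 (k+1) ≤ V := by
        rw [krylov_succ]
        refine sup_le hKkV ?_
        rw [Submodule.span_le, Set.singleton_subset_iff]
        exact hMkV
      have hVeq : V = krylov M r0 (k+1) := le_antisymm hVK hKV
      -- candidate set characterization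
      have hset : ∀ y : Fin n → ℝ, y - x0 ∈ krylov M r0 (k+1) ↔
          ∃ β' : ℕ → ℝ, y = ngmresUpdate M c xNG β' k k := by
        intro y
        constructor
        · intro hy
          have hyq : y - q ∈ V := by
            rw [hVeq]
            have he : y - q = (y - x0) - (q - x0) := by abel
            rw [he]; exact Submodule.sub_mem _ hy hq0
          obtain ⟨β', hβ⟩ := (mem_span_family_iff
            (fun i => q - xNG (k - i)) (y - q)).mp hyq
          refine ⟨β', ?_⟩
          rw [ngmresUpdate, ← hqdef, ← hβ]
          abel
        · rintro ⟨β', rfl⟩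
          have hsum : (∑ i ∈ Finset.range (k+1), β' i • (q - xNG (k - i))) ∈ V :=
            (mem_span_family_iff (fun i => q - xNG (k - i)) _).mpr ⟨β', rfl⟩
          have he : ngmresUpdate M c xNG β' k k - x0
              = (q - x0) + ∑ i ∈ Finset.range (k+1), β' i • (q - xNG (k - i)) := by
            rw [ngmresUpdate, ← hqdef]; abel
          rw [he]
          exact Submodule.add_mem _ hq0 (hVeq ▸ hsum)
      obtain ⟨hupd, hmin⟩ := hNGstep k
      have hC1' : xNG (k+1) - x0 ∈ krylov M r0 (k+1) := (hset _).mpr ⟨β k, hupd⟩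
      have hC2' : ∀ y, y - x0 ∈ krylov M r0 (k+1) →
          norm2 (residv M c (xNG (k+1))) ≤ norm2 (residv M c y) := by
        intro y hy
        obtain ⟨β', rfl⟩ := (hset y).mp hy
        exact hmin β'
      refine ⟨?_, ?_, ?_⟩
      · intro j hj
        rcases Nat.lt_succ_iff_lt_or_eq.mp (Nat.lt_succ_of_le hj) with hj' | rfl
        · exact C1 j (Nat.lt_succ_iff.mp hj')
        · exact hC1'
      · intro j hj
        rcases Nat.lt_succ_iff_lt_or_eq.mp (Nat.lt_succ_of_le hj) with hj' | rfl
        · exact C2 j (Nat.lt_succ_iff.mp hj')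
        · exact hC2'
      · intro j hj hjk0
        rcases Nat.lt_succ_iff_lt_or_eq.mp (Nat.lt_succ_of_le hj) with hj' | rfl
        · exact C3 j (Nat.lt_succ_iff.mp hj') hjk0
        · set S : Submodule ℝ (Fin n → ℝ) :=
            Submodule.span ℝ (Set.range (fun i : Fin (k+2) => xNG i - x0)) with hSdef
          have hSk : krylov M r0 k ≤ S := by
            refine le_trans (C3 k le_rfl hkk0) (Submodule.span_le.mpr ?_)
            rintro v ⟨i, rfl⟩
            exact Submodule.subset_span ⟨⟨i, by omega⟩, rfl⟩
          have hx1S : xNG (k+1) - x0 ∈ S :=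
            Submodule.subset_span ⟨⟨k+1, by omega⟩, rfl⟩
          obtain ⟨u, hu, a, hxu⟩ := mem_krylov_succ hC1'
          have hMkS : (M^k).mulVec r0 ∈ S := by
            by_cases ha : a = 0
            · exfalso
              have hxk : xNG (k+1) - x0 ∈ krylov M r0 k := by
                rw [hxu, ha, zero_smul, add_zero]; exact hu
              have hle := C2 k le_rfl (xNG (k+1)) hxk
              have hlt := hdec (k+1) (Nat.succ_pos _) hjk0
              simp only [Nat.add_sub_cancel] at hlt
              exact absurd hle (not_le.mpr hlt)
            · have heq : a • (M^k).mulVec r0 = (xNG (k+1) - x0) - u := by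
                rw [hxu]; abel
              have hmem : a • (M^k).mulVec r0 ∈ S := by
                rw [heq]; exact S.sub_mem hx1S (hSk hu)
              have := S.smul_mem a⁻¹ hmem
              rwa [smul_smul, inv_mul_cancel₀ ha, one_smul] at this
          rw [krylov_succ]
          refine sup_le hSk ?_
          rw [Submodule.span_le, Set.singleton_subset_iff]
          exact hMkS
  -- ============ residual equality ============
  have hresEq : ∀ j ≤ k0, residv M c (xNG j) = residv M c (xG j) := by
    intro j hj
    obtain ⟨C1, C2, _⟩ := main j hj
    exact min_residual_unique M c x0 (krylov M r0 j) (C1 j le_rfl) (hGstep j).1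
      (C2 j le_rfl) (hGstep j).2
  refine ⟨hresEq, ?_⟩
  intro hAdet
  -- M is invertible
  have hMdet : IsUnit M.det := by
    have h1 : P.det ≠ 0 := by simpa [isUnit_iff_ne_zero] using hP
    have h2 : A.det ≠ 0 := by simpa [isUnit_iff_ne_zero] using hAdet
    rw [isUnit_iff_ne_zero, hMdef, Matrix.det_mul, Matrix.det_nonsing_inv,
      Ring.inverse_eq_inv']
    exact mul_ne_zero (inv_ne_zero h1) h2
  have hMinj : Function.Injective M.mulVec := by
    have : Invertible M := M.invertibleOfIsUnitDet hMdet
    exact M.mulVec_injective_of_invertible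
  have hresInj : ∀ y z : Fin n → ℝ, residv M c y = residv M c z → y = z := by
    intro y z h
    apply hMinj
    have : M.mulVec y - c = M.mulVec z - c := h
    have := congrArg (· + c) this
    simpa using this
  have hxEq : ∀ j ≤ k0, xNG j = xG j := fun j hj => hresInj _ _ (hresEq j hj)
  -- ============ AA part ============
  obtain ⟨C1, C2, C3⟩ := main k0 le_rfl
  have hAAkey : ∀ j, j ≤ k0 → ∀ i ≤ j, xA (i+1) = qmap M c (xNG i) := by
    intro j
    induction j with
    | zero =>
      intro _ i hi
      interval_cases i
      have h := (hAstep 0).1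
      rw [h]
      show aaUpdate M c xA (γ 0) 0 0 = _
      rw [aaUpdate]
      rw [show Finset.Icc 1 0 = (∅ : Finset ℕ) from Finset.Icc_eq_empty (by omega)]
      rw [Finset.sum_empty, add_zero, hA0, hNG0]
    | succ j ihj =>
      intro hj1 i hi
      rcases Nat.lt_succ_iff_lt_or_eq.mp (Nat.lt_succ_of_le hi) with hi' | rfl
      · exact ihj (le_of_lt hj1) i (Nat.lt_succ_iff.mp hi')
      · -- the real work at step m = j+1
        set m : ℕ := j + 1 with hmdef
        have hmk0 : m ≤ k0 := hj1
        have inv : ∀ i ≤ j, xA (i+1) = qmap M c (xNG i) := ihj (le_of_lt hj1)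
        -- xA l - x0 ∈ krylov m for l ≤ m
        have hxA0 : ∀ l ≤ m, xA l - x0 ∈ krylov M r0 m := by
          intro l hl
          rcases Nat.eq_zero_or_pos l with rfl | hlpos
          · rw [hA0, sub_self]; exact Submodule.zero_mem _
          · obtain ⟨l', rfl⟩ : ∃ l', l = l' + 1 := ⟨l - 1, by omega⟩
            rw [inv l' (by omega), qmap_eq]
            have he : xNG l' - residv M c (xNG l') - x0
                = (xNG l' - x0) - residv M c (xNG l') := by abel
            rw [he]
            refine Submodule.sub_mem _
              (krylov_mono M r0 (by omega) (C1 l' (by omega))) ?_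
            rw [hresid (xNG l')]
            exact Submodule.add_mem _ (r0_mem_krylov M r0 (by omega))
              (krylov_mono M r0 (by omega)
                (mulVec_mem_krylov (C1 l' (by omega))))
        -- generators of the AA search space
        set D : Submodule ℝ (Fin n → ℝ) :=
          Submodule.span ℝ (Set.range (fun i : Fin m => xA m - xA (m - (1 + (i:ℕ))))) with hDdef
        have hgenD : ∀ i : Fin m, xA m - xA (m - (1 + (i:ℕ))) ∈ D :=
          fun i => Submodule.subset_span ⟨i, rfl⟩
        have hxAm : xA m = qmap M c (xNG j) := inv j le_rfl
        -- dvec l := qmap (xNG l) - x0 ∈ D for l ≤ j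
        have hdl : ∀ l ≤ j, qmap M c (xNG l) - x0 ∈ D := by
          intro l hl
          rcases Nat.lt_or_ge l j with hlj | hlj
          · -- l < j : generator i = j - l - 1, so 1 + i = j - l, m - (1+i) = l + 1
            have hgen1 := hgenD ⟨j - l - 1, by omega⟩
            simp only at hgen1
            rw [show m - (1 + (j - l - 1)) = l + 1 by omega] at hgen1
            rw [inv l (by omega), hxAm] at hgen1
            -- hgen1 : qmap (xNG j) - qmap (xNG l) ∈ D
            have hgen2 := hgenD ⟨j, by omega⟩
            simp only at hgen2
            rw [show m - (1 + j) = 0 by omega, hA0, hxAm] at hgen2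
            -- hgen2 : qmap (xNG j) - x0 ∈ D
            have he : qmap M c (xNG l) - x0
                = (qmap M c (xNG j) - x0) - (qmap M c (xNG j) - qmap M c (xNG l)) := by abel
            rw [he]; exact D.sub_mem hgen2 hgen1
          · have hlj' : l = j := le_antisymm hl hlj
            subst hlj'
            have hgen2 := hgenD ⟨l, by omega⟩
            simp only at hgen2
            rw [show m - (1 + l) = 0 by omega, hA0, hxAm] at hgen2
            exact hgen2
        have hr0D : r0 ∈ D := by
          have h0 := hdl 0 (Nat.zero_le j)
          rw [hNG0, qmap_eq] at h0
          have he : x0 - residv M c x0 - x0 = -r0 := by rw [← hr0def]; abel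
          rw [he] at h0
          have := D.neg_mem h0
          rwa [neg_neg] at this
        -- (1-M) maps krylov j into D
        have hIM' : ∀ v ∈ Submodule.span ℝ
            (Set.range (fun i : Fin (j+1) => xNG (i:ℕ) - x0)), (1 - M).mulVec v ∈ D := by
          intro v hvS
          induction hvS using Submodule.span_induction with
          | mem w hw =>
            obtain ⟨l, rfl⟩ := hw
            have hlj : (l : ℕ) ≤ j := Nat.lt_succ_iff.mp l.isLt
            have he : (1 - M).mulVec (xNG l - x0)
                = (qmap M c (xNG l) - x0) + r0 := by
              rw [Matrix.sub_mulVec, Matrix.one_mulVec, qmap_eq,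
                hresid (xNG l), Matrix.mulVec_sub]
              abel
            rw [he]
            exact D.add_mem (hdl l hlj) hr0D
          | zero => rw [Matrix.mulVec_zero]; exact D.zero_mem
          | add w₁ w₂ _ _ h₁ h₂ => rw [Matrix.mulVec_add]; exact D.add_mem h₁ h₂
          | smul a w _ h => rw [Matrix.mulVec_smul]; exact D.smul_mem a h
        have hIM : ∀ v ∈ krylov M r0 j, (1 - M).mulVec v ∈ D :=
          fun v hv => hIM' v (C3 j (by omega) (by omega) hv)
        -- krylov m ≤ D
        have hKD : krylov M r0 m ≤ D := by
          have hpow : ∀ i' < m, (M^i').mulVec r0 ∈ D := by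
            intro i'
            induction i' with
            | zero => intro _; rw [pow_zero, Matrix.one_mulVec]; exact hr0D
            | succ i'' ihh =>
              intro hi''
              have h1 : (M^i'').mulVec r0 ∈ D := ihh (by omega)
              have h2 : (M^i'').mulVec r0 ∈ krylov M r0 j :=
                pow_mem_krylov M r0 (by omega)
              have h3 := hIM _ h2
              have he : (M^(i''+1)).mulVec r0
                  = (M^i'').mulVec r0 - (1 - M).mulVec ((M^i'').mulVec r0) := by
                rw [Matrix.sub_mulVec, Matrix.one_mulVec, Matrix.mulVec_mulVec, ← pow_succ']
                abel
              rw [he]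
              exact D.sub_mem h1 h3
          show Submodule.span ℝ {v | ∃ i < m, v = (M ^ i).mulVec r0} ≤ D
          rw [Submodule.span_le]
          rintro v ⟨i', hi', rfl⟩
          exact hpow i' hi'
        -- xbar and its properties
        set xbar : (ℕ → ℝ) → (Fin n → ℝ) :=
          fun γ' => xA m + ∑ i ∈ Finset.Icc 1 m, γ' i • (xA m - xA (m - i)) with hxbardef
        have hobj : ∀ γ' : ℕ → ℝ, aaObj M c xA γ' m m = residv M c (xbar γ') := by
          intro γ'
          rw [hxbardef]
          simp only
          rw [hresid (xA m + ∑ i ∈ Finset.Icc 1 m, γ' i • (xA m - xA (m - i)))]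
          rw [aaObj, hresid (xA m)]
          have he : r0 + M.mulVec (xA m + (∑ i ∈ Finset.Icc 1 m, γ' i • (xA m - xA (m - i))) - x0)
              = (r0 + M.mulVec (xA m - x0))
                + M.mulVec (∑ i ∈ Finset.Icc 1 m, γ' i • (xA m - xA (m - i))) := by
            rw [show xA m + (∑ i ∈ Finset.Icc 1 m, γ' i • (xA m - xA (m - i))) - x0
              = (xA m - x0) + ∑ i ∈ Finset.Icc 1 m, γ' i • (xA m - xA (m - i)) from by abel]
            rw [Matrix.mulVec_add]; abel
          rw [he, mulVec_finsum]
          congr 1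
          refine Finset.sum_congr rfl fun i _ => ?_
          rw [Matrix.mulVec_smul]
          congr 1
          rw [hresid (xA (m - i))]
          simp only [Matrix.mulVec_sub]
          abel
        have hupd2 : ∀ γ' : ℕ → ℝ, aaUpdate M c xA γ' m m = qmap M c (xbar γ') := by
          intro γ'
          have hS : (∑ i ∈ Finset.Icc 1 m, γ' i • (qmap M c (xA m) - qmap M c (xA (m - i))))
              = (∑ i ∈ Finset.Icc 1 m, γ' i • (xA m - xA (m - i)))
                - (∑ i ∈ Finset.Icc 1 m,
                    γ' i • (residv M c (xA m) - residv M c (xA (m - i)))) := by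
            rw [← Finset.sum_sub_distrib]
            refine Finset.sum_congr rfl fun i _ => ?_
            rw [← smul_sub]
            congr 1
            rw [qmap_eq, qmap_eq]
            abel
          have h2 : aaUpdate M c xA γ' m m = xbar γ' - aaObj M c xA γ' m m := by
            rw [hxbardef]
            simp only []
            rw [aaUpdate, aaObj, hS, qmap_eq]
            abel
          rw [h2, qmap_eq, hobj]
        -- Icc-range sum conversion
        have hIcc : ∀ (f : ℕ → Fin n → ℝ),
            (∑ i ∈ Finset.Icc 1 m, f i) = ∑ i ∈ Finset.range m, f (1 + i) := by
          intro f
          rw [← Finset.Ico_add_one_right_eq_Icc, Finset.sum_Ico_eq_sum_range]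
          rfl
        have hxA_m_x0 : xA m - x0 ∈ krylov M r0 m := hxA0 m le_rfl
        have hsetA : ∀ y : Fin n → ℝ, y - x0 ∈ krylov M r0 m ↔ ∃ γ', y = xbar γ' := by
          intro y
          constructor
          · intro hy
            have hyq : y - xA m ∈ D := by
              have he : y - xA m = (y - x0) - (xA m - x0) := by abel
              rw [he]
              exact Submodule.sub_mem _ (hKD hy) (hKD hxA_m_x0)
            obtain ⟨β', hβ⟩ := (mem_span_family_iff
              (fun i => xA m - xA (m - (1 + i))) (y - xA m)).mp hyq
            refine ⟨fun i => β' (i - 1), ?_⟩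
            rw [hxbardef]
            simp only []
            rw [hIcc (fun i => β' (i - 1) • (xA m - xA (m - i)))]
            simp only [Nat.add_sub_cancel_left]
            rw [← hβ]
            abel
          · rintro ⟨γ', rfl⟩
            rw [hxbardef]
            simp only []
            have he : xA m + (∑ i ∈ Finset.Icc 1 m, γ' i • (xA m - xA (m - i))) - x0
                = (xA m - x0) + ∑ i ∈ Finset.Icc 1 m, γ' i • (xA m - xA (m - i)) := by abel
            rw [he]
            refine Submodule.add_mem _ hxA_m_x0
              (Submodule.sum_mem _ fun i hi => Submodule.smul_mem _ _ ?_)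
            have he2 : xA m - xA (m - i) = (xA m - x0) - (xA (m - i) - x0) := by abel
            rw [he2]
            exact Submodule.sub_mem _ hxA_m_x0 (hxA0 (m - i) (by omega))
        obtain ⟨hupdA, hminA⟩ := hAstep m
        have hb1 : xbar (γ m) - x0 ∈ krylov M r0 m := (hsetA (xbar (γ m))).mpr ⟨γ m, rfl⟩
        have hb2 : ∀ y, y - x0 ∈ krylov M r0 m →
            norm2 (residv M c (xbar (γ m))) ≤ norm2 (residv M c y) := by
          intro y hy
          obtain ⟨γ', rfl⟩ := (hsetA y).mp hy
          have h := hminA γ'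
          simp only [] at h
          rwa [hobj (γ m), hobj γ'] at h
        have hfinal : residv M c (xbar (γ m)) = residv M c (xNG m) :=
          min_residual_unique M c x0 (krylov M r0 m) hb1 (C1 m hmk0) hb2 (C2 m hmk0)
        have hxbarNG : xbar (γ m) = xNG m := hresInj _ _ hfinal
        rw [hupdA]
        show aaUpdate M c xA (γ m) m m = qmap M c (xNG m)
        rw [hupd2 (γ m), hxbarNG]
  have hqm : ∀ j, qmap M c (xNG j) = xNG j - residv M c (xNG j) := fun j => qmap_eq M c (xNG j)
  intro j hj
  exact ⟨hxEq j hj, hAAkey j hj j le_rfl, hqm j⟩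

end
end

section
/- The residuals of GMRES applied to Ax = b satisfy (r_{k+1}^G)ᵀ A r_k^G = 0 and (r_{k+1}^G)ᵀ (r_j^G − r_i^G) = 0 for all 0 ≤ i ≤ j ≤ k + 1. -/
open Matrix Filter

noncomputable section

lemma dot_self_nonneg' {n : ℕ} (x : Fin n → ℝ) : 0 ≤ x ⬝ᵥ x :=
  Finset.sum_nonneg fun i _ => mul_self_nonneg (x i)

lemma coeff_zero (c d : ℝ) (hd : 0 ≤ d) (h : ∀ t : ℝ, 0 ≤ 2 * t * c + t ^ 2 * d) :
    c = 0 := by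
  have h1 := h (-c / (d + 1))
  have hd1 : (0:ℝ) < d + 1 := by linarith
  have key : 0 ≤ (-2 * c ^ 2 * (d + 1) + c ^ 2 * d) := by
    have := mul_le_mul_of_nonneg_left h1 (le_of_lt (mul_pos hd1 hd1))
    calc (0:ℝ) ≤ (d+1) * (d+1) * (2 * (-c / (d + 1)) * c + (-c / (d + 1)) ^ 2 * d) := by
          simpa using this
      _ = -2 * c ^ 2 * (d + 1) + c ^ 2 * d := by field_simp
  nlinarith [sq_nonneg c]

lemma krylov_mono {n : ℕ} (A : Matrix (Fin n) (Fin n) ℝ) (r0 : Fin n → ℝ)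
    {j k : ℕ} (h : j ≤ k) : krylov A r0 j ≤ krylov A r0 k :=
  Submodule.span_mono fun v ⟨i, hi, hv⟩ => ⟨i, lt_of_lt_of_le hi h, hv⟩

lemma mulVec_krylov {n : ℕ} (A : Matrix (Fin n) (Fin n) ℝ) (r0 : Fin n → ℝ)
    {k : ℕ} {v : Fin n → ℝ} (hv : v ∈ krylov A r0 k) :
    A.mulVec v ∈ krylov A r0 (k + 1) := by
  induction hv using Submodule.span_induction with
  | mem w hw =>
    obtain ⟨i, hi, rfl⟩ := hw
    apply Submodule.subset_span
    exact ⟨i + 1, by omega, by rw [pow_succ', Matrix.mulVec_mulVec]⟩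
  | zero => simp [Matrix.mulVec_zero, Submodule.zero_mem]
  | add a b _ _ ha hb => rw [Matrix.mulVec_add]; exact Submodule.add_mem _ ha hb
  | smul c a _ ha => rw [Matrix.mulVec_smul]; exact Submodule.smul_mem _ c ha

lemma gmres_ortho {n : ℕ} {A : Matrix (Fin n) (Fin n) ℝ} {b x0 : Fin n → ℝ}
    {xG : ℕ → Fin n → ℝ} (hG : IsGMRES A b x0 xG) (k : ℕ) {v : Fin n → ℝ}
    (hv : v ∈ krylov A (residv A b x0) k) :
    residv A b (xG k) ⬝ᵥ A.mulVec v = 0 := by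
  obtain ⟨hmem, hmin⟩ := (hG.2 k)
  set r := residv A b (xG k) with hr
  set w := A.mulVec v with hw
  apply coeff_zero _ (w ⬝ᵥ w) (dot_self_nonneg' w)
  intro t
  have hy : (xG k + t • v) - x0 ∈ krylov A (residv A b x0) k := by
    have : (xG k + t • v) - x0 = (xG k - x0) + t • v := by abel
    rw [this]
    exact Submodule.add_mem _ hmem (Submodule.smul_mem _ t hv)
  have hle := hmin _ hy
  have hres : residv A b (xG k + t • v) = r + t • w := by
    simp only [hr, hw, residv, Matrix.mulVec_add, Matrix.mulVec_smul]
    abel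
  rw [hres] at hle
  have hsq : r ⬝ᵥ r ≤ (r + t • w) ⬝ᵥ (r + t • w) := by
    rcases le_or_gt ((r + t • w) ⬝ᵥ (r + t • w)) (r ⬝ᵥ r) with hc | hc
    · rcases eq_or_lt_of_le hc with hc | hc
      · rw [hc]
      · exfalso
        have := Real.sqrt_lt_sqrt (dot_self_nonneg' _) hc
        exact absurd hle (not_le.mpr this)
    · exact le_of_lt hc
  have hexp : (r + t • w) ⬝ᵥ (r + t • w)
      = r ⬝ᵥ r + 2 * t * (r ⬝ᵥ w) + t ^ 2 * (w ⬝ᵥ w) := by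
    simp [dotProduct_add, add_dotProduct, dotProduct_smul,
      smul_dotProduct, dotProduct_comm w r, smul_eq_mul]
    ring
  rw [hexp] at hsq
  linarith

lemma residv_mem_krylov {n : ℕ} {A : Matrix (Fin n) (Fin n) ℝ} {b x0 : Fin n → ℝ}
    {xG : ℕ → Fin n → ℝ} (hG : IsGMRES A b x0 xG) (k : ℕ) :
    residv A b (xG k) ∈ krylov A (residv A b x0) (k + 1) := by
  have hmem := (hG.2 k).1
  have h1 : residv A b (xG k) = residv A b x0 + A.mulVec (xG k - x0) := by
    simp only [residv, Matrix.mulVec_sub]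
    abel
  rw [h1]
  refine Submodule.add_mem _ ?_ (mulVec_krylov A _ hmem)
  apply Submodule.subset_span
  exact ⟨0, by omega, by simp⟩

/-- GMRES orthogonality properties
`(r_{k+1}^G)ᵀ A r_k^G = 0` and `(r_{k+1}^G)ᵀ (r_j^G - r_i^G) = 0` for `0 ≤ i ≤ j ≤ k+1`. -/
theorem stmt7 (n : ℕ) (A : Matrix (Fin n) (Fin n) ℝ) (b x0 : Fin n → ℝ)
    (xG : ℕ → Fin n → ℝ) (hG : IsGMRES A b x0 xG) (k : ℕ) :
    residv A b (xG (k + 1)) ⬝ᵥ A.mulVec (residv A b (xG k)) = 0 ∧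
    ∀ i j : ℕ, i ≤ j → j ≤ k + 1 →
      residv A b (xG (k + 1)) ⬝ᵥ (residv A b (xG j) - residv A b (xG i)) = 0 := by
  constructor
  · exact gmres_ortho hG (k + 1)
      (krylov_mono A _ (Nat.le_refl _) (residv_mem_krylov hG k))
  · intro i j hij hjk
    have hdiff : residv A b (xG j) - residv A b (xG i) = A.mulVec (xG j - xG i) := by
      simp only [residv, Matrix.mulVec_sub]
      abel
    rw [hdiff]
    apply gmres_ortho hG (k + 1)
    have h1 : xG j - xG i = (xG j - x0) - (xG i - x0) := by abel
    rw [h1]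
    exact Submodule.sub_mem _
      (krylov_mono A _ hjk (hG.2 j).1)
      (krylov_mono A _ (hij.trans hjk) (hG.2 i).1)

end
end

section
/- The residuals of NGMRES (with any window size m, including the full version m_k = k) satisfy the orthogonality relation r_{k+1}ᵀ W_k = 0, where W_k = [r_k − M r_k, r_{k−1} − M r_k, …, r_{k−m_k} − M r_k]; equivalently, r_{k+1}ᵀ A r_k = 0 and r_{k+1}ᵀ (r_{k−j} − r_{k−i}) = 0 for all i, j = 0, 1, …, m_k. -/
open Matrix Filter

noncomputable section

lemma orth_of_min {n : ℕ} (v w : Fin n → ℝ)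
    (h : ∀ t : ℝ, norm2 v ≤ norm2 (v + t • w)) : v ⬝ᵥ w = 0 := by
  have hc : (0:ℝ) ≤ w ⬝ᵥ w := Finset.sum_nonneg fun i _ => mul_self_nonneg _
  have key : ∀ t : ℝ, 0 ≤ 2 * t * (v ⬝ᵥ w) + t ^ 2 * (w ⬝ᵥ w) := by
    intro t
    have h1 := h t
    unfold norm2 at h1
    have h2 : v ⬝ᵥ v ≤ (v + t • w) ⬝ᵥ (v + t • w) := by
      have hv : (0:ℝ) ≤ v ⬝ᵥ v := Finset.sum_nonneg fun i _ => mul_self_nonneg _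
      have hv2 : (0:ℝ) ≤ (v + t • w) ⬝ᵥ (v + t • w) :=
        Finset.sum_nonneg fun i _ => mul_self_nonneg _
      nlinarith [Real.sq_sqrt hv, Real.sq_sqrt hv2, Real.sqrt_nonneg (v ⬝ᵥ v),
        Real.sqrt_nonneg ((v + t • w) ⬝ᵥ (v + t • w)), h1]
    have h3 : (v + t • w) ⬝ᵥ (v + t • w)
        = v ⬝ᵥ v + 2 * t * (v ⬝ᵥ w) + t ^ 2 * (w ⬝ᵥ w) := by
      simp [dotProduct_add, add_dotProduct, smul_dotProduct, dotProduct_smul,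
        dotProduct_comm w v, smul_eq_mul]
      ring
    linarith [h2, h3.symm ▸ h2]
  rcases eq_or_lt_of_le hc with hc0 | hc0
  · have k1 := key 1
    have k2 := key (-1)
    nlinarith
  · have hk := key (-(v ⬝ᵥ w) / (w ⬝ᵥ w))
    have hne : (w ⬝ᵥ w) ≠ 0 := ne_of_gt hc0
    field_simp at hk
    have hD : (0:ℝ) < w ⬝ᵥ w * (w ⬝ᵥ w) ^ 2 := by positivity
    rw [zero_mul] at hk
    have h2 : (v ⬝ᵥ w) ^ 2 * (w ⬝ᵥ w) ^ 2 = 0 :=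
      le_antisymm (by nlinarith [mul_nonneg hk (sq_nonneg (w ⬝ᵥ w))]) (by positivity)
    rcases mul_eq_zero.mp h2 with h3 | h3
    · exact pow_eq_zero_iff (by norm_num) |>.mp h3
    · exact absurd (pow_eq_zero_iff (by norm_num) |>.mp h3) hne

lemma residv_update {n : ℕ} (A : Matrix (Fin n) (Fin n) ℝ) (b : Fin n → ℝ)
    (x : ℕ → Fin n → ℝ) (β : ℕ → ℝ) (k m : ℕ) :
    residv A b (ngmresUpdate A b x β k m) =
      (1 - A).mulVec (residv A b (x k)) +
        ∑ i ∈ Finset.range (m + 1),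
          β i • ((1 - A).mulVec (residv A b (x k)) - residv A b (x (k - i))) := by
  have hq : ∀ y, A.mulVec (qmap A b y) = (1 - A).mulVec (residv A b y) + b := by
    intro y
    simp [qmap, residv, Matrix.mulVec_add, Matrix.mulVec_sub, Matrix.sub_mulVec,
      Matrix.one_mulVec, Matrix.mulVec_mulVec, Matrix.add_mul, Matrix.one_mul,
      Matrix.sub_mul, Matrix.add_mulVec, Matrix.neg_mulVec, neg_smul, one_smul,
      Matrix.smul_mul, Matrix.smul_mulVec]
    abel
  unfold residv ngmresUpdate
  rw [Matrix.mulVec_add]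
  rw [show A.mulVec (∑ i ∈ Finset.range (m+1), β i • (qmap A b (x k) - x (k - i)))
      = ∑ i ∈ Finset.range (m+1), β i • (A.mulVec (qmap A b (x k)) - A.mulVec (x (k - i))) by
    rw [← Matrix.mulVecLin_apply, map_sum]
    refine Finset.sum_congr rfl fun i _ => ?_
    simp [Matrix.mulVecLin_apply, Matrix.mulVec_sub]]
  rw [hq]
  have : ∀ i ∈ Finset.range (m+1),
      β i • ((((1 - A).mulVec (residv A b (x k)) + b)) - A.mulVec (x (k - i)))
      = β i • ((1 - A).mulVec (residv A b (x k)) - residv A b (x (k - i))) := by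
    intro i _
    congr 1
    simp [residv]
    abel
  rw [Finset.sum_congr rfl this]
  abel

/-- NGMRES orthogonality `r_{k+1}ᵀ W_k = 0` (columnwise:
`r_{k+1} ⊥ (r_{k-i} - M r_k)` for `0 ≤ i ≤ m_k`); equivalently `r_{k+1}ᵀ A r_k = 0`
and `r_{k+1}ᵀ (r_{k-j} - r_{k-i}) = 0` for all `i, j ≤ m_k`.  The window function `mk`
covers both NGMRES(m) (`mk k = min k m`) and full NGMRES (`mk k = k`). -/
theorem stmt10 (n : ℕ) (A : Matrix (Fin n) (Fin n) ℝ) (b x0 : Fin n → ℝ)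
    (mk : ℕ → ℕ) (hmk : ∀ k, mk k ≤ k)
    (x : ℕ → Fin n → ℝ) (β : ℕ → ℕ → ℝ)
    (hNG : IsNGMRES A b x0 mk x β) :
    ∀ k,
      (∀ i ≤ mk k, residv A b (x (k + 1)) ⬝ᵥ
        (residv A b (x (k - i)) - (1 - A).mulVec (residv A b (x k))) = 0) ∧
      residv A b (x (k + 1)) ⬝ᵥ A.mulVec (residv A b (x k)) = 0 ∧
      (∀ i ≤ mk k, ∀ j ≤ mk k, residv A b (x (k + 1)) ⬝ᵥ
        (residv A b (x (k - j)) - residv A b (x (k - i))) = 0) := by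
  intro k
  obtain ⟨hx0, hstep⟩ := hNG
  obtain ⟨hxk, hmin⟩ := hstep k
  have hmain : ∀ i ≤ mk k, residv A b (x (k + 1)) ⬝ᵥ
      (residv A b (x (k - i)) - (1 - A).mulVec (residv A b (x k))) = 0 := by
    intro i hi
    apply orth_of_min
    intro t
    have hβ' := hmin (fun j => β k j - if j = i then t else 0)
    have heq : residv A b (ngmresUpdate A b x
          (fun j => β k j - if j = i then t else 0) k (mk k))
        = residv A b (x (k + 1)) + t • (residv A b (x (k - i))
            - (1 - A).mulVec (residv A b (x k))) := by
      rw [residv_update, hxk, residv_update]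
      have hmem : i ∈ Finset.range (mk k + 1) := Finset.mem_range.mpr (Nat.lt_succ_of_le hi)
      rw [show (∑ j ∈ Finset.range (mk k + 1), (β k j - if j = i then t else 0) •
            ((1 - A).mulVec (residv A b (x k)) - residv A b (x (k - j))))
          = (∑ j ∈ Finset.range (mk k + 1), β k j •
            ((1 - A).mulVec (residv A b (x k)) - residv A b (x (k - j))))
            - t • ((1 - A).mulVec (residv A b (x k)) - residv A b (x (k - i))) by
        simp [sub_smul, Finset.sum_sub_distrib, ite_smul, Finset.sum_ite_eq' _ i, hmem]]
      module
    rw [heq] at hβ'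
    exact hβ'
  refine ⟨hmain, ?_, ?_⟩
  · have h0 := hmain 0 (Nat.zero_le _)
    simp only [Nat.sub_zero] at h0
    have hA : A.mulVec (residv A b (x k))
        = residv A b (x k) - (1 - A).mulVec (residv A b (x k)) := by
      simp [Matrix.sub_mulVec, Matrix.one_mulVec]
    rw [hA]
    exact h0
  · intro i hi j hj
    have hij : residv A b (x (k - j)) - residv A b (x (k - i))
        = (residv A b (x (k - j)) - (1 - A).mulVec (residv A b (x k)))
          - (residv A b (x (k - i)) - (1 - A).mulVec (residv A b (x k))) := by abel
    rw [hij, dotProduct_sub, hmain j hj, hmain i hi, sub_zero]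


end
end

section
/- The residuals of NGMRES (with any window size m, including the full version m_k = k) satisfy r_{k+1}ᵀ (r_{k+1} − r_k) = 0; consequently, for each k, either r_{k+1} = r_k or ‖r_k‖₂ > ‖r_{k+1}‖₂, so the 2-norms of the NGMRES residuals are nonincreasing. -/
open Matrix Filter

noncomputable section

private lemma dself_nonneg {n : ℕ} (u : Fin n → ℝ) : 0 ≤ u ⬝ᵥ u :=
  Finset.sum_nonneg fun i _ => mul_self_nonneg _

private lemma upd_hat {n : ℕ} (A : Matrix (Fin n) (Fin n) ℝ) (b : Fin n → ℝ)
    (x : ℕ → Fin n → ℝ) (k m : ℕ) :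
    ngmresUpdate A b x (fun i => if i = 0 then (-1 : ℝ) else 0) k m = x k := by
  unfold ngmresUpdate
  rw [Finset.sum_eq_single 0]
  · simp
  · intro i _ hi; simp [hi]
  · simp

private lemma upd_affine {n : ℕ} (A : Matrix (Fin n) (Fin n) ℝ) (b : Fin n → ℝ)
    (x : ℕ → Fin n → ℝ) (β γ : ℕ → ℝ) (k m : ℕ) (t : ℝ) :
    ngmresUpdate A b x (fun i => (1 - t) * β i + t * γ i) k m
      = (1 - t) • ngmresUpdate A b x β k m + t • ngmresUpdate A b x γ k m := by
  unfold ngmresUpdate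
  have hq : (1 - t) • qmap A b (x k) + t • qmap A b (x k) = qmap A b (x k) := by module
  simp only [smul_add, Finset.smul_sum, smul_smul]
  rw [add_add_add_comm, hq, ← Finset.sum_add_distrib]
  congr 1
  refine Finset.sum_congr rfl fun i _ => ?_
  rw [add_smul]

private lemma residv_affine {n : ℕ} (A : Matrix (Fin n) (Fin n) ℝ) (b : Fin n → ℝ)
    (y z : Fin n → ℝ) (t : ℝ) :
    residv A b ((1 - t) • y + t • z) = (1 - t) • residv A b y + t • residv A b z := by
  unfold residv
  rw [Matrix.mulVec_add, Matrix.mulVec_smul, Matrix.mulVec_smul]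
  module

/-- `r_{k+1}ᵀ (r_{k+1} - r_k) = 0`; consequently either `r_{k+1} = r_k`
or `‖r_k‖ > ‖r_{k+1}‖`, so the NGMRES residual norms are nonincreasing. -/
theorem stmt11 (n : ℕ) (A : Matrix (Fin n) (Fin n) ℝ) (b x0 : Fin n → ℝ)
    (mk : ℕ → ℕ) (hmk : ∀ k, mk k ≤ k)
    (x : ℕ → Fin n → ℝ) (β : ℕ → ℕ → ℝ)
    (hNG : IsNGMRES A b x0 mk x β) :
    ∀ k,
      residv A b (x (k + 1)) ⬝ᵥ (residv A b (x (k + 1)) - residv A b (x k)) = 0 ∧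
      (residv A b (x (k + 1)) = residv A b (x k) ∨
        norm2 (residv A b (x (k + 1))) < norm2 (residv A b (x k))) ∧
      norm2 (residv A b (x (k + 1))) ≤ norm2 (residv A b (x k)) := by
  obtain ⟨hx0, hstep⟩ := hNG
  intro k
  obtain ⟨hupd, hmin⟩ := hstep k
  set u := residv A b (x (k + 1)) with hu
  set v := residv A b (x k) with hv
  set βhat : ℕ → ℝ := fun i => if i = 0 then (-1 : ℝ) else 0 with hβhat
  have hxk : ngmresUpdate A b x βhat k (mk k) = x k := upd_hat A b x k (mk k)
  -- the basic minimality inequality in squared form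
  have hsq : ∀ w : Fin n → ℝ, norm2 u ≤ norm2 w → u ⬝ᵥ u ≤ w ⬝ᵥ w := by
    intro w h
    unfold norm2 at h
    have h1 := dself_nonneg u
    have h2 := dself_nonneg w
    nlinarith [Real.sq_sqrt h1, Real.sq_sqrt h2, Real.sqrt_nonneg (u ⬝ᵥ u),
      Real.sqrt_nonneg (w ⬝ᵥ w)]
  have key : ∀ t : ℝ, u ⬝ᵥ u ≤ (u + t • (v - u)) ⬝ᵥ (u + t • (v - u)) := by
    intro t
    have h1 := hmin (fun i => (1 - t) * β k i + t * βhat i)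
    have h2 : residv A b (ngmresUpdate A b x (fun i => (1 - t) * β k i + t * βhat i) k (mk k))
        = u + t • (v - u) := by
      rw [upd_affine, residv_affine, hxk, ← hupd, ← hu, ← hv]
      module
    rw [h2] at h1
    exact hsq _ h1
  set c : ℝ := u ⬝ᵥ (v - u) with hc
  set d : ℝ := (v - u) ⬝ᵥ (v - u) with hd
  have expand : ∀ t : ℝ, (u + t • (v - u)) ⬝ᵥ (u + t • (v - u))
      = u ⬝ᵥ u + 2 * t * c + t ^ 2 * d := by
    intro t
    rw [hc, hd]
    simp only [add_dotProduct, dotProduct_add, smul_dotProduct,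
      dotProduct_smul, smul_eq_mul, dotProduct_comm (v - u) u]
    ring
  have hdnn : 0 ≤ d := dself_nonneg (v - u)
  have hczero : c = 0 := by
    have h := key (-c / (d + 1))
    rw [expand] at h
    have hd1 : (0 : ℝ) < d + 1 := by linarith
    have h3 : 2 * (-c / (d + 1)) * c + (-c / (d + 1)) ^ 2 * d
        = (-(c ^ 2 * (d + 2))) / (d + 1) ^ 2 := by
      field_simp
      ring
    have h5 : (0 : ℝ) ≤ 2 * (-c / (d + 1)) * c + (-c / (d + 1)) ^ 2 * d := by linarith
    rw [h3] at h5
    have h6 : (0 : ℝ) ≤ -(c ^ 2 * (d + 2)) := by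
      by_contra hcon
      push_neg at hcon
      have := div_neg_of_neg_of_pos hcon (by positivity : (0 : ℝ) < (d + 1) ^ 2)
      linarith
    have hc2 : c ^ 2 = 0 := le_antisymm (by nlinarith) (sq_nonneg c)
    exact sq_eq_zero_iff.mp hc2
  have hsub : u ⬝ᵥ (u - v) = -c := by
    rw [hc, dotProduct_sub, dotProduct_sub]
    ring
  have goal1 : u ⬝ᵥ (u - v) = 0 := by rw [hsub, hczero, neg_zero]
  -- third goal: norm2 u ≤ norm2 v
  have goal3 : norm2 u ≤ norm2 v := by
    have h := hmin βhat
    rw [hxk] at h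
    exact h
  refine ⟨goal1, ?_, goal3⟩
  by_cases huv : u = v
  · exact Or.inl huv
  · right
    have hne : v - u ≠ 0 := sub_ne_zero.mpr (Ne.symm huv)
    have hdpos : 0 < d := by
      rcases lt_or_eq_of_le hdnn with h | h
      · exact h
      · exact absurd ((dotProduct_self_eq_zero).mp h.symm) hne
    have hexp : d = v ⬝ᵥ v - u ⬝ᵥ u := by
      have hcv : u ⬝ᵥ v = u ⬝ᵥ u := by
        have : c = u ⬝ᵥ v - u ⬝ᵥ u := by rw [hc, dotProduct_sub]
        linarith [hczero ▸ this]
      rw [hd]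
      simp only [sub_dotProduct, dotProduct_sub,
        dotProduct_comm v u, hcv]
      ring
    have hlt : u ⬝ᵥ u < v ⬝ᵥ v := by linarith [hexp ▸ hdpos]
    exact Real.sqrt_lt_sqrt (dself_nonneg u) hlt


end
end
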